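/- arXiv:1410.6743 — 7 statements merged into one kernel-verified Lean document; each statement's English description precedes it below -/
import Mathlib

section
/- If t mutually orthogonal incomplete latin squares of order n with a common hole of order m exist (with n > m), then n ≥ (t+1)m. -/
/-- An incomplete latin square of order `n` with hole `M`:
cells are empty iff both coordinates lie in `M`, rows and columns contain
each symbol at most once, and symbols of `M` do not appear in rows or
columns indexed by `M`. -/
def IsILS {n : ℕ} (M : Finset (Fin n)) (L : Fin n → Fin n → Option (Fin n)) : Prop :=
  (∀ i j, L i j = none ↔ (i ∈ M ∧ j ∈ M)) ∧
  (∀ i j j' s, L i j = some s → L i j' = some s → j = j') ∧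
  (∀ i i' j s, L i j = some s → L i' j = some s → i = i') ∧
  (∀ i j s, s ∈ M → (i ∈ M ∨ j ∈ M) → L i j ≠ some s)

/-- Two incomplete latin squares with common hole `M` are orthogonal:
every ordered pair of symbols not both in `M` appears exactly once upon
superimposition. -/
def OrthILS {n : ℕ} (M : Finset (Fin n)) (L L' : Fin n → Fin n → Option (Fin n)) : Prop :=
  ∀ p q : Fin n, ¬(p ∈ M ∧ q ∈ M) →
    ∃! ij : Fin n × Fin n, L ij.1 ij.2 = some p ∧ L' ij.1 ij.2 = some q

/-- If `t` mutually orthogonal incomplete latin squares of order `n` with a common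
hole of order `m` exist (with `n > m`), then `n ≥ (t+1)m`. -/
theorem imols_hole_bound (t n m : ℕ) (M : Finset (Fin n)) (hM : M.card = m)
    (L : Fin t → Fin n → Fin n → Option (Fin n))
    (hL : ∀ a, IsILS M (L a))
    (horth : ∀ a b, a ≠ b → OrthILS M (L a) (L b))
    (hnm : n > m) :
    n ≥ (t + 1) * m := by
  classical
  have hmn : m ≤ n := le_of_lt hnm
  have hMcard : Mᶜ.card = n - m := by
    rw [Finset.card_compl, hM, Fintype.card_fin]
  -- cells with a coordinate outside M are filled
  have hsome : ∀ (a : Fin t) i j, ¬(i ∈ M ∧ j ∈ M) → ∃ s, L a i j = some s := by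
    intro a i j h
    cases hc : L a i j with
    | none => exact absurd (((hL a).1 i j).mp hc) h
    | some s => exact ⟨s, rfl⟩
  -- each row outside M contains each symbol of M (at a column outside M)
  have hrow : ∀ (a : Fin t) (i : Fin n), i ∉ M → ∀ s ∈ M, ∃ j, j ∉ M ∧ L a i j = some s := by
    intro a i hi s hsM
    have hinj : Function.Injective (fun j : Fin n => (L a i j).getD j) := by
      intro j j' h
      obtain ⟨sj, hj⟩ := hsome a i j (fun hc => hi hc.1)
      obtain ⟨sj', hj'⟩ := hsome a i j' (fun hc => hi hc.1)
      have h' : (L a i j).getD j = (L a i j').getD j' := h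
      rw [hj, hj'] at h'
      replace h := h'
      simp only [Option.getD_some] at h
      subst h
      exact (hL a).2.1 i j j' sj hj hj'
    obtain ⟨j, hj⟩ := Finite.injective_iff_surjective.mp hinj s
    obtain ⟨sj, hjs⟩ := hsome a i j (fun hc => hi hc.1)
    simp only at hj
    rw [hjs, Option.getD_some] at hj
    subst hj
    refine ⟨j, fun hjM => (hL a).2.2.2 i j sj hsM (Or.inr hjM) hjs, hjs⟩
  -- the sets of outside cells carrying a hole symbol
  set S : Fin t → Finset (Fin n × Fin n) := fun a =>
    (Mᶜ ×ˢ Mᶜ).filter (fun ij => (L a ij.1 ij.2).getD ij.2 ∈ M) with hS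
  have memS : ∀ a ij, ij ∈ S a ↔ ij.1 ∉ M ∧ ij.2 ∉ M ∧ ∃ s ∈ M, L a ij.1 ij.2 = some s := by
    intro a ij
    simp only [hS, Finset.mem_filter, Finset.mem_product, Finset.mem_compl]
    constructor
    · rintro ⟨⟨h1, h2⟩, h3⟩
      obtain ⟨s, hs⟩ := hsome a ij.1 ij.2 (fun hc => h1 hc.1)
      rw [hs, Option.getD_some] at h3
      exact ⟨h1, h2, s, h3, hs⟩
    · rintro ⟨h1, h2, s, hsM, hs⟩
      rw [hs, Option.getD_some]
      exact ⟨⟨h1, h2⟩, hsM⟩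
  -- cardinality of each S a
  have cardS : ∀ a, (S a).card = (n - m) * m := by
    intro a
    have hb : (S a).card = (Mᶜ ×ˢ M).card := by
      apply Finset.card_bij (fun ij _ => (ij.1, (L a ij.1 ij.2).getD ij.2))
      · intro ij hij
        rw [memS] at hij
        obtain ⟨h1, h2, s, hsM, hs⟩ := hij
        rw [Finset.mem_product, hs, Option.getD_some]
        exact ⟨Finset.mem_compl.mpr h1, hsM⟩
      · intro ij hij ij' hij' heq
        rw [memS] at hij hij'
        obtain ⟨h1, h2, s, hsM, hs⟩ := hij
        obtain ⟨h1', h2', s', hsM', hs'⟩ := hij'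
        rw [hs, hs'] at heq
        simp only [Option.getD_some, Prod.mk.injEq] at heq
        obtain ⟨e1, e2⟩ := heq
        subst e2
        rw [← e1] at hs'
        have e3 : ij.2 = ij'.2 := (hL a).2.1 ij.1 ij.2 ij'.2 s hs hs'
        exact Prod.ext e1 e3
      · intro b hb
        rw [Finset.mem_product, Finset.mem_compl] at hb
        obtain ⟨hb1, hb2⟩ := hb
        obtain ⟨j, hjM, hj⟩ := hrow a b.1 hb1 b.2 hb2
        refine ⟨(b.1, j), ?_, ?_⟩
        · rw [memS]
          exact ⟨hb1, hjM, b.2, hb2, hj⟩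
        · simp only [hj, Option.getD_some]
    rw [hb, Finset.card_product, hMcard, hM]
  -- no cell carries a hole symbol in two different squares
  have hdisj : ∀ a b, a ≠ b → ∀ i j s s', L a i j = some s → L b i j = some s' →
      s ∈ M → s' ∈ M → False := by
    intro a b hab i j s s' ha hb hsM hs'M
    set D : Finset (Fin n × Fin n) :=
      Finset.univ.filter (fun pq : Fin n × Fin n => ¬(pq.1 ∈ M ∧ pq.2 ∈ M)) with hD
    set f : Fin n × Fin n → Fin n × Fin n := fun pq =>
      if h : ¬(pq.1 ∈ M ∧ pq.2 ∈ M) then (horth a b hab pq.1 pq.2 h).choose else pq with hfdef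
    have hf : ∀ pq : Fin n × Fin n, ¬(pq.1 ∈ M ∧ pq.2 ∈ M) →
        L a (f pq).1 (f pq).2 = some pq.1 ∧ L b (f pq).1 (f pq).2 = some pq.2 := by
      intro pq h
      simp only [hfdef, dif_pos h]
      exact (horth a b hab pq.1 pq.2 h).choose_spec.1
    have hmaps : ∀ pq ∈ D, f pq ∈ D := by
      intro pq hpq
      simp only [hD, Finset.mem_filter, Finset.mem_univ, true_and] at hpq ⊢
      intro hmem
      have h1 := (hf pq hpq).1
      have h2 := ((hL a).1 (f pq).1 (f pq).2).mpr hmem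
      rw [h2] at h1
      cases h1
    have hinj : ∀ pq ∈ D, ∀ pq' ∈ D, f pq = f pq' → pq = pq' := by
      intro pq hpq pq' hpq' heq
      simp only [hD, Finset.mem_filter, Finset.mem_univ, true_and] at hpq hpq'
      have h1 := hf pq hpq
      have h2 := hf pq' hpq'
      rw [heq] at h1
      have e1 : pq.1 = pq'.1 := Option.some.inj (h1.1.symm.trans h2.1)
      have e2 : pq.2 = pq'.2 := Option.some.inj (h1.2.symm.trans h2.2)
      exact Prod.ext e1 e2
    have hsurj := Finset.surj_on_of_inj_on_of_card_le (fun pq _ => f pq)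
      (fun pq hpq => hmaps pq hpq) (fun pq pq' hpq hpq' h => hinj pq hpq pq' hpq' h) le_rfl
    have hijD : (i, j) ∈ D := by
      simp only [hD, Finset.mem_filter, Finset.mem_univ, true_and]
      intro hmem
      have h2 := ((hL a).1 i j).mpr hmem
      rw [h2] at ha
      cases ha
    obtain ⟨pq, hpqD, hfpq⟩ := hsurj (i, j) hijD
    have hpq' : ¬(pq.1 ∈ M ∧ pq.2 ∈ M) := by
      simpa only [hD, Finset.mem_filter, Finset.mem_univ, true_and] using hpqD
    have hfpq' : (i, j) = f pq := hfpq
    have h := hf pq hpq'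
    rw [← hfpq'] at h
    have e1 : pq.1 = s := Option.some.inj (h.1.symm.trans ha)
    have e2 : pq.2 = s' := Option.some.inj (h.2.symm.trans hb)
    exact hpq' ⟨e1 ▸ hsM, e2 ▸ hs'M⟩
  -- the sets S a are pairwise disjoint
  have hdisjS : ∀ a ∈ (Finset.univ : Finset (Fin t)), ∀ b ∈ (Finset.univ : Finset (Fin t)),
      a ≠ b → Disjoint (S a) (S b) := by
    intro a _ b _ hab
    rw [Finset.disjoint_left]
    intro ij hia hib
    rw [memS] at hia hib
    obtain ⟨_, _, s, hsM, hs⟩ := hia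
    obtain ⟨_, _, s', hs'M, hs'⟩ := hib
    exact hdisj a b hab ij.1 ij.2 s s' hs hs' hsM hs'M
  -- counting
  have hsub : (Finset.univ : Finset (Fin t)).biUnion S ⊆ Mᶜ ×ˢ Mᶜ := by
    intro ij h
    rw [Finset.mem_biUnion] at h
    obtain ⟨a, _, ha⟩ := h
    exact Finset.filter_subset _ _ ha
  have hcount : t * ((n - m) * m) ≤ (n - m) * (n - m) := by
    calc t * ((n - m) * m) = ∑ a : Fin t, (S a).card := by
          rw [Finset.sum_congr rfl (fun a _ => cardS a)]
          simp [Finset.sum_const, mul_comm]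
      _ = ((Finset.univ : Finset (Fin t)).biUnion S).card :=
          (Finset.card_biUnion hdisjS).symm
      _ ≤ (Mᶜ ×ˢ Mᶜ).card := Finset.card_le_card hsub
      _ = (n - m) * (n - m) := by rw [Finset.card_product, hMcard]
  have hkey : t * m ≤ n - m := by
    have h1 : (t * m) * (n - m) ≤ (n - m) * (n - m) := by
      calc (t * m) * (n - m) = t * ((n - m) * m) := by ring
        _ ≤ (n - m) * (n - m) := hcount
    exact Nat.le_of_mul_le_mul_right h1 (by omega)
  have hexp : (t + 1) * m = t * m + m := by ring
  omega
end

section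
/- If an IPBD((v;w),K) exists with v > w and k = min K, then v ≥ (k-1)w + 1. -/
private lemma multiset_sum_swap {α β : Type*} (M : Multiset α) (s : Finset β)
    (f : α → β → ℕ) :
    (M.map (fun a => ∑ y ∈ s, f a y)).sum = ∑ y ∈ s, (M.map (fun a => f a y)).sum := by
  induction M using Multiset.induction with
  | empty => simp
  | cons a M ih => simp [ih, Finset.sum_add_distrib]

private lemma countP_eq_sum_ind {α : Type*} (p : α → Prop) [DecidablePred p]
    (M : Multiset α) :
    M.countP p = (M.map (fun a => if p a then 1 else 0)).sum := by
  induction M using Multiset.induction with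
  | empty => simp
  | cons a M ih =>
    by_cases h : p a <;> simp [Multiset.countP_cons, h, ih, Nat.add_comm]

/-- If an `IPBD((v;w),K)` exists with `v > w` and `k = min K`,
then `v ≥ (k-1)w + 1`. -/
theorem ipbd_hole_size_bound (v w : ℕ) (hvw : w < v)
    (K : Set ℕ) (hK : ∀ j ∈ K, 2 ≤ j)
    (k : ℕ) (hkK : k ∈ K) (hkmin : ∀ j ∈ K, k ≤ j)
    (W : Finset (Fin v)) (hW : W.card = w)
    (B : Multiset (Finset (Fin v)))
    (hsz : ∀ b ∈ B, b.card ∈ K)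
    (hhole : ∀ b ∈ B, ∀ x ∈ b, ∀ y ∈ b, x ∈ W → y ∈ W → x = y)
    (hcov : ∀ x y : Fin v, x ≠ y → ¬(x ∈ W ∧ y ∈ W) →
      Multiset.countP (fun s => x ∈ s ∧ y ∈ s) B = 1) :
    v ≥ (k - 1) * w + 1 := by
  -- pick a point x outside the hole
  obtain ⟨x, hx⟩ : ∃ x : Fin v, x ∉ W := by
    by_contra h
    push_neg at h
    have : (Finset.univ : Finset (Fin v)) ⊆ W := fun y _ => h y
    have := Finset.card_le_card this
    simp [hW] at this
    omega
  -- blocks containing x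
  set Bx : Multiset (Finset (Fin v)) := B.filter (fun b => x ∈ b) with hBx
  -- Step A: number of blocks through x is at least w
  have hr : w ≤ Multiset.card Bx := by
    have h1 : ∀ p ∈ W, B.countP (fun b => x ∈ b ∧ p ∈ b) = 1 := by
      intro p hp
      exact hcov x p (fun h => hx (h ▸ hp)) (fun h => hx h.1)
    have h2 : (∑ p ∈ W, B.countP (fun b => x ∈ b ∧ p ∈ b)) = w := by
      rw [Finset.sum_congr rfl h1]; simp [hW]
    have h3 : (∑ p ∈ W, B.countP (fun b => x ∈ b ∧ p ∈ b))
        ≤ B.countP (fun b => x ∈ b) := by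
      have := multiset_sum_swap B W (fun b p => if x ∈ b ∧ p ∈ b then 1 else 0)
      calc (∑ p ∈ W, B.countP (fun b => x ∈ b ∧ p ∈ b))
          = (B.map (fun b => ∑ p ∈ W, if x ∈ b ∧ p ∈ b then 1 else 0)).sum := by
            rw [this]
            exact Finset.sum_congr rfl fun p _ => countP_eq_sum_ind _ B
        _ ≤ (B.map (fun b => if x ∈ b then 1 else 0)).sum := by
            apply Multiset.sum_map_le_sum_map
            intro b hb
            by_cases hxb : x ∈ b
            · rw [if_pos hxb]
              have : ∑ p ∈ W, (if x ∈ b ∧ p ∈ b then 1 else 0)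
                  = (W.filter (· ∈ b)).card := by
                rw [Finset.card_filter]
                exact Finset.sum_congr rfl fun p _ => by simp [hxb]
              rw [this]
              apply Finset.card_le_one.mpr
              intro p hp q hq
              simp only [Finset.mem_filter] at hp hq
              exact hhole b hb p hp.2 q hq.2 hp.1 hq.1
            · simp [hxb]
        _ = B.countP (fun b => x ∈ b) := (countP_eq_sum_ind _ B).symm
    rw [hBx, Multiset.countP_eq_card_filter] at *
    omega
  -- Step B: sum of (|b| - 1) over blocks through x equals v - 1
  have hsum : (Bx.map (fun b => b.card - 1)).sum = v - 1 := by
    have key : ∀ b ∈ Bx, b.card - 1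
        = ∑ y ∈ Finset.univ.erase x, (if y ∈ b then 1 else 0) := by
      intro b hb
      have hxb : x ∈ b := (Multiset.mem_filter.mp hb).2
      have : (Finset.univ.erase x).filter (· ∈ b) = b.erase x := by
        ext y; simp [Finset.mem_erase, and_comm]
      rw [← Finset.card_filter, this, Finset.card_erase_of_mem hxb]
    calc (Bx.map (fun b => b.card - 1)).sum
        = (Bx.map (fun b => ∑ y ∈ Finset.univ.erase x, (if y ∈ b then 1 else 0))).sum := by
          apply congrArg
          exact Multiset.map_congr rfl key
      _ = ∑ y ∈ Finset.univ.erase x, (Bx.map (fun b => if y ∈ b then 1 else 0)).sum :=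
          multiset_sum_swap _ _ _
      _ = ∑ y ∈ Finset.univ.erase x, (1 : ℕ) := by
          apply Finset.sum_congr rfl
          intro y hy
          have hyx : y ≠ x := (Finset.mem_erase.mp hy).1
          rw [← countP_eq_sum_ind, hBx, Multiset.countP_filter]
          exact hcov y x hyx (fun h => hx h.2)
      _ = v - 1 := by
          rw [Finset.sum_const, smul_eq_mul, mul_one,
            Finset.card_erase_of_mem (Finset.mem_univ x)]
          simp
  -- Step C: lower bound on the sum
  have hlow : Multiset.card Bx * (k - 1) ≤ (Bx.map (fun b => b.card - 1)).sum := by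
    have := Multiset.card_nsmul_le_sum (s := Bx.map (fun b => b.card - 1)) (a := k - 1) ?_
    · simpa using this
    · intro n hn
      obtain ⟨b, hb, rfl⟩ := Multiset.mem_map.mp hn
      have hbB : b ∈ B := (Multiset.mem_filter.mp hb).1
      have := hkmin _ (hsz b hbB)
      omega
  have hk2 : 2 ≤ k := hK k hkK
  have : w * (k - 1) ≤ v - 1 := le_trans (Nat.mul_le_mul_right _ hr) (hsum ▸ hlow)
  have hv1 : 1 ≤ v := by omega
  calc (k - 1) * w + 1 ≤ (v - 1) + 1 :=
        Nat.add_le_add_right (by rw [Nat.mul_comm]; exact this) 1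
    _ ≤ v := by omega
end

section
/- Given a GDD (V, Π, B) with groups V_1,...,V_u, a weight function ω : V → ℕ, and for every block B ∈ B a GDD of type [ω(x) : x ∈ B] with block sizes in K, there exists a GDD with block sizes in K of type [∑_{x∈V_1} ω(x), ..., ∑_{x∈V_u} ω(x)] (Wilson's fundamental construction). -/
/-- There exists a group divisible design with group sizes given by the
multiset `T` and block sizes in `K`. -/
def GDDTypeExists (T : Multiset ℕ) (K : Set ℕ) : Prop :=
  ∃ (v u : ℕ) (grp : Fin v → Fin u) (B : Multiset (Finset (Fin v))),
    Multiset.map (fun i => (Finset.univ.filter fun x => grp x = i).card)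
        (Finset.univ.val : Multiset (Fin u)) = T ∧
    (∀ b ∈ B, b.card ∈ K) ∧
    (∀ b ∈ B, ∀ x ∈ b, ∀ y ∈ b, grp x = grp y → x = y) ∧
    (∀ x y : Fin v, grp x ≠ grp y →
      Multiset.countP (fun s => x ∈ s ∧ y ∈ s) B = 1)



open Multiset

lemma my_countP_bind {α β : Type*} (p : β → Prop) [DecidablePred p]
    (s : Multiset α) (f : α → Multiset β) :
    Multiset.countP p (s.bind f) = (s.map fun a => Multiset.countP p (f a)).sum := by
  induction s using Multiset.induction with
  | empty => simp
  | cons a s ih => simp [Multiset.countP_add, ih]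

lemma my_countP_eq_sum {α : Type*} (p : α → Prop) [DecidablePred p] (s : Multiset α) :
    Multiset.countP p s = (s.map fun a => if p a then 1 else 0).sum := by
  induction s using Multiset.induction with
  | empty => simp
  | cons a s ih =>
    by_cases h : p a <;> simp [Multiset.countP_cons, h, ih, Nat.add_comm]

lemma rel_nodup_equiv {α β : Type*} (r : α → β → Prop) :
    ∀ {s : Multiset α} {t : Multiset β}, Multiset.Rel r s t → s.Nodup → t.Nodup →
    ∃ e : {a // a ∈ s} ≃ {b // b ∈ t}, ∀ a, r a.1 (e a).1 := by
  intro s t h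
  induction h with
  | zero =>
    intro _ _
    exact ⟨@Equiv.equivOfIsEmpty _ _ ⟨fun a => Multiset.notMem_zero _ a.2⟩
      ⟨fun b => Multiset.notMem_zero _ b.2⟩, fun a => absurd a.2 (Multiset.notMem_zero _)⟩
  | @cons a b s t hab hrel ih =>
    intro hs ht
    classical
    rw [Multiset.nodup_cons] at hs ht
    obtain ⟨e, he⟩ := ih hs.2 ht.2
    have hbt : b ∈ b ::ₘ t := Multiset.mem_cons_self b t
    refine ⟨⟨fun x => if h : x.1 = a then ⟨b, hbt⟩ else
        ⟨(e ⟨x.1, (Multiset.mem_cons.mp x.2).resolve_left h⟩).1,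
          Multiset.mem_cons_of_mem (e _).2⟩,
      fun y => if h : y.1 = b then ⟨a, Multiset.mem_cons_self a s⟩ else
        ⟨(e.symm ⟨y.1, (Multiset.mem_cons.mp y.2).resolve_left h⟩).1,
          Multiset.mem_cons_of_mem (e.symm _).2⟩, ?_, ?_⟩, ?_⟩
    · intro x
      dsimp only
      by_cases h : x.1 = a
      · rw [dif_pos h]
        simp only [dif_pos rfl]
        exact Subtype.ext h.symm
      · rw [dif_neg h]
        have hne : (e ⟨x.1, (Multiset.mem_cons.mp x.2).resolve_left h⟩).1 ≠ b := by
          intro hc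
          exact ht.1 (hc ▸ (e _).2)
        rw [dif_neg hne]
        apply Subtype.ext
        have : (⟨(e ⟨x.1, (Multiset.mem_cons.mp x.2).resolve_left h⟩).1,
            (Multiset.mem_cons.mp (Multiset.mem_cons_of_mem (e _).2)).resolve_left hne⟩ :
            {y // y ∈ t}) = e ⟨x.1, (Multiset.mem_cons.mp x.2).resolve_left h⟩ :=
          Subtype.ext rfl
        rw [this, Equiv.symm_apply_apply]
    · intro y
      dsimp only
      by_cases h : y.1 = b
      · rw [dif_pos h]
        simp only [dif_pos rfl]
        exact Subtype.ext h.symm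
      · rw [dif_neg h]
        have hne : (e.symm ⟨y.1, (Multiset.mem_cons.mp y.2).resolve_left h⟩).1 ≠ a := by
          intro hc
          exact hs.1 (hc ▸ (e.symm _).2)
        rw [dif_neg hne]
        apply Subtype.ext
        have : (⟨(e.symm ⟨y.1, (Multiset.mem_cons.mp y.2).resolve_left h⟩).1,
            (Multiset.mem_cons.mp (Multiset.mem_cons_of_mem (e.symm _).2)).resolve_left hne⟩ :
            {x // x ∈ s}) = e.symm ⟨y.1, (Multiset.mem_cons.mp y.2).resolve_left h⟩ :=
          Subtype.ext rfl
        rw [this, Equiv.apply_symm_apply]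
    · intro x
      by_cases h : x.1 = a
      · simp only [Equiv.coe_fn_mk, dif_pos h]
        show r x.1 b
        rw [h]; exact hab
      · simp only [Equiv.coe_fn_mk, dif_neg h]
        exact he ⟨x.1, (Multiset.mem_cons.mp x.2).resolve_left h⟩

lemma finset_rel_equiv {α β : Type*} (s : Finset α) (t : Finset β) (f : α → ℕ) (g : β → ℕ)
    (h : s.val.map f = t.val.map g) :
    ∃ e : {a // a ∈ s} ≃ {b // b ∈ t}, ∀ a, f a.1 = g (e a).1 := by
  have := (Multiset.rel_map (p := (· = ·))).mp (Multiset.rel_eq.mpr h)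
  exact rel_nodup_equiv _ this s.nodup t.nodup

/-- Wilson's fundamental construction: given a master GDD, a weight function `ω`,
and for every block an ingredient GDD with block sizes in `K` whose group type is
the multiset of weights of the block's points, there exists a GDD with block sizes
in `K` whose group type is given by the total weights of the master's groups. -/
theorem wilson_fundamental_construction (v u : ℕ) (grp : Fin v → Fin u)
    (B : Multiset (Finset (Fin v)))
    (hmeet : ∀ b ∈ B, ∀ x ∈ b, ∀ y ∈ b, grp x = grp y → x = y)
    (hcov : ∀ x y : Fin v, grp x ≠ grp y →
      Multiset.countP (fun s => x ∈ s ∧ y ∈ s) B = 1)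
    (ω : Fin v → ℕ) (K : Set ℕ)
    (hing : ∀ b ∈ B, GDDTypeExists (Multiset.map ω b.val) K) :
    GDDTypeExists
      (Multiset.map (fun i => ∑ x ∈ Finset.univ.filter (fun x => grp x = i), ω x)
        (Finset.univ.val : Multiset (Fin u))) K := by
  classical
  choose vb ub grpb Bb htype hK hmeet' hcov' using
    fun (b : {b // b ∈ B}) => hing b.1 b.2
  choose E hE using fun b =>
    finset_rel_equiv (Finset.univ : Finset (Fin (ub b))) b.1
      (fun i => (Finset.univ.filter fun x => grpb b x = i).card) ω (htype b)
  set P := (x : Fin v) × Fin (ω x) with hP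
  -- the per-group bijection
  let π : ∀ b, Fin (ub b) → {x // x ∈ b.1} := fun b i => E b ⟨i, Finset.mem_univ i⟩
  have hπinj : ∀ b, Function.Injective (π b) := by
    intro b i j h
    have := (E b).injective h
    exact congrArg Subtype.val this
  have hsize : ∀ b i, Fintype.card {p : Fin (vb b) // grpb b p = i} = ω (π b i).1 := by
    intro b i
    rw [Fintype.card_subtype]
    exact hE b ⟨i, Finset.mem_univ i⟩
  let f : ∀ b (i : Fin (ub b)), {p : Fin (vb b) // grpb b p = i} ≃ Fin (ω (π b i).1) :=
    fun b i => Fintype.equivFinOfCardEq (hsize b i)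
  let ι : ∀ b, Fin (vb b) → P := fun b p => ⟨(π b (grpb b p)).1, f b (grpb b p) ⟨p, rfl⟩⟩
  have hfst : ∀ b p, (ι b p).1 ∈ b.1 := fun b p => (π b (grpb b p)).2
  have hinj : ∀ b, Function.Injective (ι b) := by
    intro b p q h
    have h1 : (π b (grpb b p)).1 = (π b (grpb b q)).1 := congrArg Sigma.fst h
    have hgrp : grpb b p = grpb b q := hπinj b (Subtype.ext h1)
    have h2 : HEq (ι b p).2 (ι b q).2 := (Sigma.ext_iff.mp h).2
    have key : ∀ (i j : Fin (ub b)) (hp : grpb b p = i) (hq : grpb b q = j), i = j →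
        HEq (f b i ⟨p, hp⟩) (f b j ⟨q, hq⟩) → p = q := by
      rintro i j hp hq rfl hh
      have := (f b i).injective (eq_of_heq hh)
      exact congrArg Subtype.val this
    exact key _ _ rfl rfl hgrp h2
  have hsurj : ∀ b (x : Fin v) (hx : x ∈ b.1) (k : Fin (ω x)),
      ∃ p, ι b p = ⟨x, k⟩ := by
    intro b x hx k
    obtain ⟨⟨i0, _⟩, hi0⟩ := (E b).surjective ⟨x, hx⟩
    have hi : (π b i0).1 = x := by
      have : π b i0 = ⟨x, hx⟩ := by
        rw [← hi0]
      exact congrArg Subtype.val this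
    subst hi
    refine ⟨((f b i0).symm k).1, ?_⟩
    have hp : grpb b ((f b i0).symm k).1 = i0 := ((f b i0).symm k).2
    have key : ∀ (j : Fin (ub b)) (hpj : grpb b ((f b i0).symm k).1 = j), j = i0 →
        (⟨(π b j).1, f b j ⟨((f b i0).symm k).1, hpj⟩⟩ : P) = ⟨(π b i0).1, k⟩ := by
      rintro j hpj rfl
      congr 1
      have : (⟨((f b j).symm k).1, hpj⟩ : {p // grpb b p = j}) = (f b j).symm k :=
        Subtype.ext rfl
      rw [this, Equiv.apply_symm_apply]
    exact key _ rfl hp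
  -- the new block collection on P
  set Bnew : Multiset (Finset P) :=
    B.attach.bind (fun b => (Bb b).map (fun s => s.image (ι b))) with hBnew
  have hsizes : ∀ t ∈ Bnew, t.card ∈ K := by
    intro t ht
    rw [hBnew, Multiset.mem_bind] at ht
    obtain ⟨b, _, ht⟩ := ht
    rw [Multiset.mem_map] at ht
    obtain ⟨s, hs, rfl⟩ := ht
    rw [Finset.card_image_of_injective _ (hinj b)]
    exact hK b s hs
  have hmeets : ∀ t ∈ Bnew, ∀ p ∈ t, ∀ q ∈ t, grp p.1 = grp q.1 → p = q := by
    intro t ht p hp q hq hg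
    rw [hBnew, Multiset.mem_bind] at ht
    obtain ⟨b, _, ht⟩ := ht
    rw [Multiset.mem_map] at ht
    obtain ⟨s, hs, rfl⟩ := ht
    rw [Finset.mem_image] at hp hq
    obtain ⟨p0, hp0, rfl⟩ := hp
    obtain ⟨q0, hq0, rfl⟩ := hq
    have hx : (π b (grpb b p0)).1 = (π b (grpb b q0)).1 :=
      hmeet b.1 b.2 _ (hfst b p0) _ (hfst b q0) hg
    have : grpb b p0 = grpb b q0 := hπinj b (Subtype.ext hx)
    have := hmeet' b s hs p0 hp0 q0 hq0 this
    rw [this]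
  have hcovs : ∀ p q : P, grp p.1 ≠ grp q.1 →
      Multiset.countP (fun t => p ∈ t ∧ q ∈ t) Bnew = 1 := by
    rintro ⟨x, kx⟩ ⟨y, ky⟩ hg
    have hxy : x ≠ y := fun h => hg (by subst h; rfl)
    rw [hBnew, my_countP_bind]
    have hper : ∀ b : {b // b ∈ B},
        Multiset.countP (fun t => (⟨x, kx⟩ : P) ∈ t ∧ (⟨y, ky⟩ : P) ∈ t)
          ((Bb b).map (fun s => s.image (ι b)))
        = if x ∈ b.1 ∧ y ∈ b.1 then 1 else 0 := by
      intro b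
      by_cases hxb : x ∈ b.1 ∧ y ∈ b.1
      · obtain ⟨hxb1, hyb1⟩ := hxb
        obtain ⟨p0, hp0⟩ := hsurj b x hxb1 kx
        obtain ⟨q0, hq0⟩ := hsurj b y hyb1 ky
        rw [if_pos ⟨hxb1, hyb1⟩]
        rw [Multiset.countP_map]
        have : Multiset.card (Multiset.filter
            (fun s => (⟨x, kx⟩ : P) ∈ s.image (ι b) ∧ (⟨y, ky⟩ : P) ∈ s.image (ι b))
            (Bb b))
            = Multiset.countP (fun s => p0 ∈ s ∧ q0 ∈ s) (Bb b) := by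
          rw [Multiset.countP_eq_card_filter]
          congr 1
          apply Multiset.filter_congr
          intro s _
          constructor
          · rintro ⟨h1, h2⟩
            rw [Finset.mem_image] at h1 h2
            obtain ⟨a1, ha1, he1⟩ := h1
            obtain ⟨a2, ha2, he2⟩ := h2
            rw [← hp0] at he1
            rw [← hq0] at he2
            rw [hinj b he1] at ha1
            rw [hinj b he2] at ha2
            exact ⟨ha1, ha2⟩
          · rintro ⟨h1, h2⟩
            exact ⟨Finset.mem_image.mpr ⟨p0, h1, hp0⟩, Finset.mem_image.mpr ⟨q0, h2, hq0⟩⟩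
        rw [this]
        apply hcov' b
        intro hc
        apply hxy
        have : (ι b p0).1 = (ι b q0).1 := by
          show (π b (grpb b p0)).1 = (π b (grpb b q0)).1
          rw [hc]
        rwa [hp0, hq0] at this
      · rw [if_neg hxb]
        rw [Multiset.countP_eq_zero]
        intro t ht
        rw [Multiset.mem_map] at ht
        obtain ⟨s, hs, rfl⟩ := ht
        rintro ⟨h1, h2⟩
        apply hxb
        rw [Finset.mem_image] at h1 h2
        obtain ⟨a1, _, he1⟩ := h1
        obtain ⟨a2, _, he2⟩ := h2
        constructor
        · have := hfst b a1; rwa [he1] at this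
        · have := hfst b a2; rwa [he2] at this
    calc (Multiset.map (fun b => Multiset.countP
            (fun t => (⟨x, kx⟩ : P) ∈ t ∧ (⟨y, ky⟩ : P) ∈ t)
            ((Bb b).map (fun s => s.image (ι b)))) B.attach).sum
        = (Multiset.map (fun b : {b // b ∈ B} =>
            if x ∈ b.1 ∧ y ∈ b.1 then 1 else 0) B.attach).sum := by
          congr 1
          exact Multiset.map_congr rfl (fun b _ => hper b)
      _ = (Multiset.map (fun s => if x ∈ s ∧ y ∈ s then 1 else 0) B).sum := by
          congr 1
          conv_rhs => rw [← Multiset.attach_map_val B]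
          rw [Multiset.map_map]
          rfl
      _ = Multiset.countP (fun s => x ∈ s ∧ y ∈ s) B := (my_countP_eq_sum _ _).symm
      _ = 1 := hcov x y hg
  -- transport to Fin
  let n := Fintype.card P
  let δ : Fin n ≃ P := (Fintype.equivFin P).symm
  refine ⟨n, u, fun m => grp (δ m).1, Bnew.map (fun t => t.map δ.symm.toEmbedding),
    ?_, ?_, ?_, ?_⟩
  · apply Multiset.map_congr rfl
    intro i _
    have h1 : (Finset.univ.filter fun m => grp (δ m).1 = i).card
        = Fintype.card {m // grp (δ m).1 = i} := (Fintype.card_subtype _).symm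
    rw [h1]
    rw [Fintype.card_congr (δ.subtypeEquiv (fun m => Iff.rfl) :
      {m // grp (δ m).1 = i} ≃ {p : P // grp p.1 = i})]
    rw [Fintype.card_congr (Equiv.subtypeSigmaEquiv (fun x => Fin (ω x)) (fun x => grp x = i))]
    rw [Fintype.card_sigma]
    simp only [Fintype.card_fin]
    exact (Finset.sum_subtype (Finset.univ.filter fun x => grp x = i)
      (fun x => by simp) ω).symm
  · intro t ht
    rw [Multiset.mem_map] at ht
    obtain ⟨t0, ht0, rfl⟩ := ht
    rw [Finset.card_map]
    exact hsizes t0 ht0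
  · intro t ht p hp q hq hg
    rw [Multiset.mem_map] at ht
    obtain ⟨t0, ht0, rfl⟩ := ht
    rw [Finset.mem_map] at hp hq
    obtain ⟨p0, hp0, rfl⟩ := hp
    obtain ⟨q0, hq0, rfl⟩ := hq
    have : p0 = q0 := by
      apply hmeets t0 ht0 p0 hp0 q0 hq0
      simpa using hg
    rw [this]
  · intro m1 m2 hg
    rw [Multiset.countP_map]
    rw [← Multiset.countP_eq_card_filter]
    have : Multiset.countP
        (fun t => m1 ∈ t.map δ.symm.toEmbedding ∧ m2 ∈ t.map δ.symm.toEmbedding) Bnew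
        = Multiset.countP (fun t => δ m1 ∈ t ∧ δ m2 ∈ t) Bnew := by
      apply Multiset.countP_congr rfl
      intro t _
      have hm : ∀ (m : Fin n), (m ∈ t.map δ.symm.toEmbedding) = (δ m ∈ t) := by
        intro m
        simp only [Finset.mem_map, Equiv.coe_toEmbedding, eq_iff_iff]
        constructor
        · rintro ⟨a, ha, rfl⟩
          simpa using ha
        · intro h
          exact ⟨δ m, h, by simp⟩
      rw [hm m1, hm m2]
    rw [this]
    exact hcovs _ _ hg
end

section
/- If a GDD(T,K) on v points exists having a group of size a, and for every other group size g occurring in T there exists an IPBD((g+i; i), K), then there exists an IPBD((v+i; a+i), K). -/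
/-- There exists an incomplete pairwise balanced design `IPBD((n;m),K)`. -/
def IPBDExists (n m : ℕ) (K : Set ℕ) : Prop :=
  ∃ (W : Finset (Fin n)) (B : Multiset (Finset (Fin n))),
    W.card = m ∧
    (∀ b ∈ B, b.card ∈ K) ∧
    (∀ b ∈ B, ∀ x ∈ b, ∀ y ∈ b, x ∈ W → y ∈ W → x = y) ∧
    (∀ x y : Fin n, x ≠ y → ¬(x ∈ W ∧ y ∈ W) →
      Multiset.countP (fun s => x ∈ s ∧ y ∈ s) B = 1)

/-- Build an injection sending a prescribed set `A` onto `E` and its complement onto `S`. -/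
lemma exists_fill_inj {α β : Type*} [Fintype α] [DecidableEq α] [DecidableEq β]
    (A : Finset α) (E S : Finset β) (hd : Disjoint E S)
    (h1 : A.card = E.card) (h2 : Aᶜ.card = S.card) :
    ∃ f : α → β, Function.Injective f ∧ (∀ x ∈ A, f x ∈ E) ∧ (∀ x, x ∉ A → f x ∈ S) ∧
      (∀ e ∈ E, ∃ x ∈ A, f x = e) ∧ (∀ s ∈ S, ∃ x, x ∉ A ∧ f x = s) := by
  classical
  let e1 := Finset.equivOfCardEq h1
  let e2 := Finset.equivOfCardEq h2
  refine ⟨fun x => if h : x ∈ A then (e1 ⟨x, h⟩ : β) else (e2 ⟨x, Finset.mem_compl.2 h⟩ : β),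
    ?_, ?_, ?_, ?_, ?_⟩
  · intro x y hxy
    by_cases hx : x ∈ A <;> by_cases hy : y ∈ A <;> simp only [hx, hy, dif_pos, dif_neg,
      not_false_iff] at hxy
    · have := Subtype.coe_injective hxy
      exact Subtype.mk_eq_mk.1 (e1.injective this)
    · exact absurd ((e2 ⟨y, Finset.mem_compl.2 hy⟩).2)
        (Finset.disjoint_left.1 hd (hxy ▸ (e1 ⟨x, hx⟩).2))
    · exact absurd ((e2 ⟨x, Finset.mem_compl.2 hx⟩).2)
        (Finset.disjoint_left.1 hd (hxy.symm ▸ (e1 ⟨y, hy⟩).2))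
    · have := Subtype.coe_injective hxy
      exact Subtype.mk_eq_mk.1 (e2.injective this)
  · intro x hx; simp only [hx, dif_pos]; exact (e1 ⟨x, hx⟩).2
  · intro x hx; simp only [hx, dif_neg, not_false_iff]
    exact (e2 ⟨x, Finset.mem_compl.2 hx⟩).2
  · intro e he
    refine ⟨(e1.symm ⟨e, he⟩ : α), (e1.symm ⟨e, he⟩).2, ?_⟩
    simp only [(e1.symm ⟨e, he⟩).2, dif_pos, Subtype.coe_eta, Equiv.apply_symm_apply]
  · intro s hs
    refine ⟨(e2.symm ⟨s, hs⟩ : α), Finset.mem_compl.1 (e2.symm ⟨s, hs⟩).2, ?_⟩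
    simp only [Finset.mem_compl.1 (e2.symm ⟨s, hs⟩).2, dif_neg, not_false_iff,
      Subtype.coe_eta, Equiv.apply_symm_apply]

lemma countP_map_pair {α β : Type*} [DecidableEq α] [DecidableEq β] {f : α → β}
    (hf : Function.Injective f) (B : Multiset (Finset α)) (x y : α) :
    Multiset.countP (fun s => f x ∈ s ∧ f y ∈ s) (B.map (Finset.image f)) =
      Multiset.countP (fun s => x ∈ s ∧ y ∈ s) B := by
  rw [Multiset.countP_map, Multiset.countP_eq_card_filter]
  congr 1
  apply Multiset.filter_congr
  intro b _
  simp [hf.mem_finset_image]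

lemma countP_sum {α β : Type*} (p : β → Prop) [DecidablePred p] (s : Finset α)
    (f : α → Multiset β) :
    Multiset.countP p (∑ j ∈ s, f j) = ∑ j ∈ s, Multiset.countP p (f j) := by
  classical
  induction s using Finset.induction with
  | empty => simp
  | insert _ _ h ih => rw [Finset.sum_insert h, Finset.sum_insert h, Multiset.countP_add, ih]

/-- Filling all but one group of a GDD: if a `GDD(T,K)` on `v` points exists having a
distinguished group of size `a`, and for every other group there exists an
`IPBD((g+i; i), K)` where `g` is the group's size, then there exists an
`IPBD((v+i; a+i), K)`. -/
theorem gdd_to_ipbd (v u i : ℕ) (K : Set ℕ)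
    (grp : Fin v → Fin u)
    (B : Multiset (Finset (Fin v)))
    (hsz : ∀ b ∈ B, b.card ∈ K)
    (hmeet : ∀ b ∈ B, ∀ x ∈ b, ∀ y ∈ b, grp x = grp y → x = y)
    (hcov : ∀ x y : Fin v, grp x ≠ grp y →
      Multiset.countP (fun s => x ∈ s ∧ y ∈ s) B = 1)
    (j₀ : Fin u)
    (hfill : ∀ j : Fin u, j ≠ j₀ →
      IPBDExists ((Finset.univ.filter fun x => grp x = j).card + i) i K) :
    IPBDExists (v + i) ((Finset.univ.filter fun x => grp x = j₀).card + i) K := by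
  classical
  set old : Fin v → Fin (v + i) := Fin.castAdd i with hold
  set nw : Fin i → Fin (v + i) := Fin.natAdd v with hnw
  have hold_inj : Function.Injective old := by
    intro a b h
    have := congrArg Fin.val h
    simp only [hold, Fin.coe_castAdd] at this
    exact Fin.ext this
  have hnw_inj : Function.Injective nw := fun a b h => by
    have := congrArg Fin.val h
    simp only [hnw, Fin.coe_natAdd] at this
    exact Fin.ext (by omega)
  have hon : ∀ (z : Fin v) (e : Fin i), old z ≠ nw e := by
    intro z e h
    have := congrArg Fin.val h
    simp only [hold, hnw, Fin.coe_castAdd, Fin.coe_natAdd] at this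
    omega
  set S : Fin u → Finset (Fin (v + i)) :=
    fun j => (Finset.univ.filter fun z => grp z = j).image old with hS
  set E : Finset (Fin (v + i)) := Finset.univ.image nw with hE
  have hmemS : ∀ (z : Fin v) (j : Fin u), old z ∈ S j ↔ grp z = j := by
    intro z j
    rw [hS]
    rw [hold_inj.mem_finset_image]
    simp
  have hmemE : ∀ e : Fin i, nw e ∈ E := fun e => Finset.mem_image_of_mem _ (Finset.mem_univ e)
  have holdE : ∀ z : Fin v, old z ∉ E := by
    intro z hz
    obtain ⟨e, _, he⟩ := Finset.mem_image.1 hz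
    exact hon z e he.symm
  have hnwS : ∀ (e : Fin i) (j : Fin u), nw e ∉ S j := by
    intro e j h
    obtain ⟨z, _, hz⟩ := Finset.mem_image.1 h
    exact hon z e hz
  have hdisj : ∀ j, Disjoint E (S j) := by
    intro j
    rw [Finset.disjoint_left]
    intro x hx hx'
    obtain ⟨e, _, rfl⟩ := Finset.mem_image.1 hx
    exact hnwS e j hx'
  have hScard : ∀ j, (S j).card = (Finset.univ.filter fun z => grp z = j).card :=
    fun j => Finset.card_image_of_injective _ hold_inj
  have hEcard : E.card = i := by
    rw [hE, Finset.card_image_of_injective _ hnw_inj, Finset.card_univ, Fintype.card_fin]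
  have hdecomp : ∀ x : Fin (v + i), (∃ z, x = old z) ∨ (∃ e, x = nw e) := by
    intro x
    by_cases h : (x : ℕ) < v
    · exact Or.inl ⟨⟨x, h⟩, Fin.ext rfl⟩
    · refine Or.inr ⟨⟨(x : ℕ) - v, by omega⟩, Fin.ext ?_⟩
      simp only [hnw, Fin.coe_natAdd]
      omega
  -- per-group fill designs
  have key : ∀ j : Fin u, ∃ M : Multiset (Finset (Fin (v + i))),
      (∀ b ∈ M, b.card ∈ K) ∧
      (∀ b ∈ M, ∀ x ∈ b, x ∈ S j ∨ x ∈ E) ∧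
      (∀ b ∈ M, ∀ x ∈ b, ∀ y ∈ b, x ∈ E → y ∈ E → x = y) ∧
      (j = j₀ → M = 0) ∧
      (j ≠ j₀ → ∀ x y : Fin (v + i), (x ∈ S j ∨ x ∈ E) → (y ∈ S j ∨ y ∈ E) → x ≠ y →
        ¬(x ∈ E ∧ y ∈ E) → Multiset.countP (fun s => x ∈ s ∧ y ∈ s) M = 1) := by
    intro j
    by_cases hj : j = j₀
    · exact ⟨0, by simp, by simp, by simp, fun _ => rfl, fun h => absurd hj h⟩
    · obtain ⟨Wj, Bj, hWc, hKj, hhole, hcnt⟩ := hfill j hj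
      have hco : Wjᶜ.card = (S j).card := by
        rw [Finset.card_compl, hWc, Fintype.card_fin, hScard]
        omega
      obtain ⟨f, hfinj, hfE, hfS, hsurE, hsurS⟩ :=
        exists_fill_inj Wj E (S j) (hdisj j) (hWc.trans hEcard.symm) hco
      refine ⟨Bj.map (Finset.image f), ?_, ?_, ?_, fun h => absurd h hj, fun _ => ?_⟩
      · intro b hb
        obtain ⟨b', hb', rfl⟩ := Multiset.mem_map.1 hb
        rw [Finset.card_image_of_injective _ hfinj]
        exact hKj b' hb'
      · intro b hb x hx
        obtain ⟨b', hb', rfl⟩ := Multiset.mem_map.1 hb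
        obtain ⟨x', _, rfl⟩ := Finset.mem_image.1 hx
        by_cases h : x' ∈ Wj
        · exact Or.inr (hfE _ h)
        · exact Or.inl (hfS _ h)
      · intro b hb x hx y hy hxE hyE
        obtain ⟨b', hb', rfl⟩ := Multiset.mem_map.1 hb
        obtain ⟨x', hx', rfl⟩ := Finset.mem_image.1 hx
        obtain ⟨y', hy', rfl⟩ := Finset.mem_image.1 hy
        have hxW : x' ∈ Wj := by
          by_contra h
          exact (Finset.disjoint_left.1 (hdisj j) hxE) (hfS _ h)
        have hyW : y' ∈ Wj := by
          by_contra h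
          exact (Finset.disjoint_left.1 (hdisj j) hyE) (hfS _ h)
        exact congrArg f (hhole b' hb' x' hx' y' hy' hxW hyW)
      · intro x y hxT hyT hxy hnE
        have getpre : ∀ w, (w ∈ S j ∨ w ∈ E) → ∃ w', f w' = w ∧ (w' ∈ Wj ↔ w ∈ E) := by
          intro w hw
          rcases hw with h | h
          · obtain ⟨w', hw'W, rfl⟩ := hsurS w h
            exact ⟨w', rfl, iff_of_false hw'W
              (fun hE => Finset.disjoint_left.1 (hdisj j) hE h)⟩
          · obtain ⟨w', hw'W, rfl⟩ := hsurE w h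
            exact ⟨w', rfl, iff_of_true hw'W h⟩
        obtain ⟨x', rfl, hxiff⟩ := getpre x hxT
        obtain ⟨y', rfl, hyiff⟩ := getpre y hyT
        rw [countP_map_pair hfinj]
        refine hcnt x' y' (fun h => hxy (congrArg f h)) ?_
        rintro ⟨h1, h2⟩
        exact hnE ⟨hxiff.1 h1, hyiff.1 h2⟩
  choose M hM1 hM2 hM3 hM0 hM4 using key
  -- zero-count helper for fill designs
  have hMzero : ∀ (j : Fin u) (x y : Fin (v + i)),
      (¬(x ∈ S j ∨ x ∈ E)) ∨ (¬(y ∈ S j ∨ y ∈ E)) →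
      Multiset.countP (fun s => x ∈ s ∧ y ∈ s) (M j) = 0 := by
    intro j x y h
    rw [Multiset.countP_eq_zero]
    rintro b hb ⟨h1, h2⟩
    rcases h with h | h
    · exact h (hM2 j b hb x h1)
    · exact h (hM2 j b hb y h2)
  refine ⟨S j₀ ∪ E, B.map (Finset.image old) + ∑ j : Fin u, M j, ?_, ?_, ?_, ?_⟩
  · rw [Finset.card_union_of_disjoint (hdisj j₀).symm, hScard, hEcard]
  · intro b hb
    rcases Multiset.mem_add.1 hb with h | h
    · obtain ⟨b', hb', rfl⟩ := Multiset.mem_map.1 h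
      rw [Finset.card_image_of_injective _ hold_inj]
      exact hsz b' hb'
    · obtain ⟨j, _, hj⟩ := Multiset.mem_sum.1 h
      exact hM1 j b hj
  · intro b hb x hx y hy hxW hyW
    rcases Multiset.mem_add.1 hb with h | h
    · obtain ⟨b', hb', rfl⟩ := Multiset.mem_map.1 h
      obtain ⟨x', hx', rfl⟩ := Finset.mem_image.1 hx
      obtain ⟨y', hy', rfl⟩ := Finset.mem_image.1 hy
      have hx0 : grp x' = j₀ := by
        rcases Finset.mem_union.1 hxW with h' | h'
        · exact (hmemS x' j₀).1 h'
        · exact absurd h' (holdE x')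
      have hy0 : grp y' = j₀ := by
        rcases Finset.mem_union.1 hyW with h' | h'
        · exact (hmemS y' j₀).1 h'
        · exact absurd h' (holdE y')
      exact congrArg old (hmeet b' hb' x' hx' y' hy' (hx0.trans hy0.symm))
    · obtain ⟨j, _, hj⟩ := Multiset.mem_sum.1 h
      have hjj : j ≠ j₀ := by
        rintro rfl
        rw [hM0 j rfl] at hj
        exact Multiset.notMem_zero b hj
      have hxE : x ∈ E := by
        rcases hM2 j b hj x hx with h' | h'
        · rcases Finset.mem_union.1 hxW with h'' | h''
          · exfalso
            obtain ⟨z, _, rfl⟩ := Finset.mem_image.1 h'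
            exact hjj (((hmemS z j).1 h').symm.trans ((hmemS z j₀).1 h''))
          · exact h''
        · exact h'
      have hyE : y ∈ E := by
        rcases hM2 j b hj y hy with h' | h'
        · rcases Finset.mem_union.1 hyW with h'' | h''
          · exfalso
            obtain ⟨z, _, rfl⟩ := Finset.mem_image.1 h'
            exact hjj (((hmemS z j).1 h').symm.trans ((hmemS z j₀).1 h''))
          · exact h''
        · exact h'
      exact hM3 j b hj x hx y hy hxE hyE
  · intro x y hxy hWW
    rw [Multiset.countP_add, countP_sum]
    rcases hdecomp x with ⟨z, rfl⟩ | ⟨e, rfl⟩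
    · rcases hdecomp y with ⟨z', rfl⟩ | ⟨e, rfl⟩
      · -- both old
        by_cases hg : grp z = grp z'
        · -- same group
          have hzz : z ≠ z' := fun h => hxy (congrArg old h)
          have hjne : grp z ≠ j₀ := by
            intro h
            exact hWW ⟨Finset.mem_union_left _ ((hmemS z j₀).2 h),
              Finset.mem_union_left _ ((hmemS z' j₀).2 (hg ▸ h))⟩
          have h1 : Multiset.countP (fun s => old z ∈ s ∧ old z' ∈ s)
              (B.map (Finset.image old)) = 0 := by
            rw [countP_map_pair hold_inj, Multiset.countP_eq_zero]
            rintro b hb ⟨hb1, hb2⟩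
            exact hzz (hmeet b hb z hb1 z' hb2 hg)
          have h2 : ∑ j : Fin u,
              Multiset.countP (fun s => old z ∈ s ∧ old z' ∈ s) (M j) = 1 := by
            rw [Finset.sum_eq_single (grp z)]
            · exact hM4 (grp z) hjne (old z) (old z')
                (Or.inl ((hmemS z (grp z)).2 rfl)) (Or.inl ((hmemS z' (grp z)).2 hg.symm))
                hxy (fun h => holdE z h.1)
            · intro k _ hk
              refine hMzero k _ _ (Or.inl ?_)
              rintro (h' | h')
              · exact hk ((hmemS z k).1 h').symm
              · exact holdE z h'
            · intro h
              exact absurd (Finset.mem_univ (grp z)) h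
          rw [h1, h2]
        · -- different groups
          have h1 : Multiset.countP (fun s => old z ∈ s ∧ old z' ∈ s)
              (B.map (Finset.image old)) = 1 := by
            rw [countP_map_pair hold_inj]
            exact hcov z z' hg
          have h2 : ∑ j : Fin u,
              Multiset.countP (fun s => old z ∈ s ∧ old z' ∈ s) (M j) = 0 := by
            apply Finset.sum_eq_zero
            intro j _
            by_cases hz : grp z = j
            · refine hMzero j _ _ (Or.inr ?_)
              rintro (h' | h')
              · exact hg (hz.trans ((hmemS z' j).1 h').symm)
              · exact holdE z' h'
            · refine hMzero j _ _ (Or.inl ?_)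
              rintro (h' | h')
              · exact hz ((hmemS z j).1 h')
              · exact holdE z h'
          rw [h1, h2]
      · -- x old, y new
        have hjne : grp z ≠ j₀ := by
          intro h
          exact hWW ⟨Finset.mem_union_left _ ((hmemS z j₀).2 h),
            Finset.mem_union_right _ (hmemE e)⟩
        have h1 : Multiset.countP (fun s => old z ∈ s ∧ nw e ∈ s)
            (B.map (Finset.image old)) = 0 := by
          rw [Multiset.countP_eq_zero]
          rintro b hb ⟨_, h2⟩
          obtain ⟨b', _, rfl⟩ := Multiset.mem_map.1 hb
          obtain ⟨z', _, hz'⟩ := Finset.mem_image.1 h2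
          exact hon z' e hz'
        have h2 : ∑ j : Fin u,
            Multiset.countP (fun s => old z ∈ s ∧ nw e ∈ s) (M j) = 1 := by
          rw [Finset.sum_eq_single (grp z)]
          · exact hM4 (grp z) hjne (old z) (nw e)
              (Or.inl ((hmemS z (grp z)).2 rfl)) (Or.inr (hmemE e))
              hxy (fun h => holdE z h.1)
          · intro k _ hk
            refine hMzero k _ _ (Or.inl ?_)
            rintro (h' | h')
            · exact hk ((hmemS z k).1 h').symm
            · exact holdE z h'
          · intro h
            exact absurd (Finset.mem_univ (grp z)) h
        rw [h1, h2]
    · rcases hdecomp y with ⟨z, rfl⟩ | ⟨e', rfl⟩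
      · -- x new, y old
        have hjne : grp z ≠ j₀ := by
          intro h
          exact hWW ⟨Finset.mem_union_right _ (hmemE e),
            Finset.mem_union_left _ ((hmemS z j₀).2 h)⟩
        have h1 : Multiset.countP (fun s => nw e ∈ s ∧ old z ∈ s)
            (B.map (Finset.image old)) = 0 := by
          rw [Multiset.countP_eq_zero]
          rintro b hb ⟨h2, _⟩
          obtain ⟨b', _, rfl⟩ := Multiset.mem_map.1 hb
          obtain ⟨z', _, hz'⟩ := Finset.mem_image.1 h2
          exact hon z' e hz'
        have h2 : ∑ j : Fin u,
            Multiset.countP (fun s => nw e ∈ s ∧ old z ∈ s) (M j) = 1 := by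
          rw [Finset.sum_eq_single (grp z)]
          · exact hM4 (grp z) hjne (nw e) (old z)
              (Or.inr (hmemE e)) (Or.inl ((hmemS z (grp z)).2 rfl))
              hxy (fun h => holdE z h.2)
          · intro k _ hk
            refine hMzero k _ _ (Or.inr ?_)
            rintro (h' | h')
            · exact hk ((hmemS z k).1 h').symm
            · exact holdE z h'
          · intro h
            exact absurd (Finset.mem_univ (grp z)) h
        rw [h1, h2]
      · -- both new: contradiction
        exact absurd ⟨Finset.mem_union_right _ (hmemE e),
          Finset.mem_union_right _ (hmemE e')⟩ hWW
end

section
/- If an IGDD(T,K) on v points with w total hole points exists, and for each group-hole size pair (g;h) in T there exists an IPBD((g+i; h+i), K), then there exists an IPBD((v+i; w+i), K). -/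
lemma countP_sum_aux {ι α : Type*} [DecidableEq ι] (s : Finset ι) (M : ι → Multiset α)
    (p : α → Prop) [DecidablePred p] :
    Multiset.countP p (∑ j ∈ s, M j) = ∑ j ∈ s, Multiset.countP p (M j) := by
  induction s using Finset.induction_on with
  | empty => simp
  | insert _ _ h ih => rw [Finset.sum_insert h, Finset.sum_insert h, Multiset.countP_add, ih]

lemma countP_map_pair_s9 {m n : ℕ} (g : Fin m → Fin n) (hg : Function.Injective g)
    (M : Multiset (Finset (Fin m))) (p q : Fin m) :
    Multiset.countP (fun s => g p ∈ s ∧ g q ∈ s) (M.map (Finset.image g)) =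
      Multiset.countP (fun a => p ∈ a ∧ q ∈ a) M := by
  have key : ∀ (a : Finset (Fin m)) (z : Fin m), g z ∈ a.image g ↔ z ∈ a := by
    intro a z
    constructor
    · intro h
      rcases Finset.mem_image.mp h with ⟨w, hw, he⟩
      rwa [← hg he]
    · exact Finset.mem_image_of_mem g
  rw [Multiset.countP_map, Multiset.countP_eq_card_filter]
  congr 1
  apply Multiset.filter_congr
  intro a _
  exact and_congr (key a p) (key a q)

/-- Filling the groups of an IGDD: if an `IGDD(T,K)` on `v` points with `w` hole
points in total exists, and for each group (of size `g`, hole size `h`) there exists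
an `IPBD((g+i; h+i), K)`, then there exists an `IPBD((v+i; w+i), K)`. -/
theorem igdd_to_ipbd (v u i : ℕ) (K : Set ℕ)
    (grp : Fin v → Fin u) (H : Finset (Fin v))
    (B : Multiset (Finset (Fin v)))
    (hsz : ∀ b ∈ B, b.card ∈ K)
    (hmeet : ∀ b ∈ B, ∀ x ∈ b, ∀ y ∈ b, grp x = grp y → x = y)
    (hcov : ∀ x y : Fin v, grp x ≠ grp y → ¬(x ∈ H ∧ y ∈ H) →
      Multiset.countP (fun s => x ∈ s ∧ y ∈ s) B = 1)
    (hholes : ∀ x y : Fin v, x ≠ y → x ∈ H → y ∈ H →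
      Multiset.countP (fun s => x ∈ s ∧ y ∈ s) B = 0)
    (hfill : ∀ j : Fin u,
      IPBDExists ((Finset.univ.filter fun x => grp x = j).card + i)
        (((Finset.univ.filter fun x => grp x = j) ∩ H).card + i) K) :
    IPBDExists (v + i) (H.card + i) K := by
  classical
  choose Wf Bf hWcard hBsz hBhole hBcov using hfill
  -- the two embeddings
  set e : Fin v → Fin (v + i) := fun a => ⟨a.1, by omega⟩ with he
  set f : Fin i → Fin (v + i) := fun b => ⟨v + b.1, by omega⟩ with hf
  have einj : Function.Injective e := by
    intro a b h
    have h' := congrArg Fin.val h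
    simp only [he] at h'
    exact Fin.ext h'
  have finj : Function.Injective f := by
    intro a b h
    have h' := congrArg Fin.val h
    simp only [hf] at h'
    exact Fin.ext (by omega)
  have hef : ∀ (a : Fin v) (b : Fin i), e a ≠ f b := by
    intro a b h
    have := congrArg Fin.val h
    simp only [he, hf] at this
    omega
  -- the merged hole
  set W' : Finset (Fin (v + i)) := H.image e ∪ Finset.univ.image f with hW'
  have e_mem_W' : ∀ a : Fin v, e a ∈ W' ↔ a ∈ H := by
    intro a
    constructor
    · intro h
      rcases Finset.mem_union.mp h with h | h
      · rcases Finset.mem_image.mp h with ⟨w, hw, hwe⟩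
        rwa [← einj hwe]
      · rcases Finset.mem_image.mp h with ⟨w, _, hwe⟩
        exact absurd hwe.symm (hef a w)
    · intro h
      exact Finset.mem_union_left _ (Finset.mem_image_of_mem e h)
  have f_mem_W' : ∀ b : Fin i, f b ∈ W' := fun b =>
    Finset.mem_union_right _ (Finset.mem_image_of_mem f (Finset.mem_univ b))
  have hW'card : W'.card = H.card + i := by
    rw [hW', Finset.card_union_of_disjoint, Finset.card_image_of_injective _ einj,
      Finset.card_image_of_injective _ finj, Finset.card_univ, Fintype.card_fin]
    rw [Finset.disjoint_left]
    intro z hz1 hz2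
    rcases Finset.mem_image.mp hz1 with ⟨a, _, rfl⟩
    rcases Finset.mem_image.mp hz2 with ⟨b, _, hb⟩
    exact hef a b hb.symm
  -- groups and their spans in the new point set
  set S : Fin u → Finset (Fin (v + i)) := fun j =>
    ((Finset.univ.filter fun x => grp x = j).image e ∪ Finset.univ.image f) with hS
  have e_mem_S : ∀ (j : Fin u) (a : Fin v), e a ∈ S j ↔ grp a = j := by
    intro j a
    constructor
    · intro h
      rcases Finset.mem_union.mp h with h | h
      · rcases Finset.mem_image.mp h with ⟨w, hw, hwe⟩
        have := einj hwe
        subst this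
        exact (Finset.mem_filter.mp hw).2
      · rcases Finset.mem_image.mp h with ⟨w, _, hwe⟩
        exact absurd hwe.symm (hef a w)
    · intro h
      exact Finset.mem_union_left _
        (Finset.mem_image_of_mem e (Finset.mem_filter.mpr ⟨Finset.mem_univ _, h⟩))
  have f_mem_S : ∀ (j : Fin u) (b : Fin i), f b ∈ S j := fun j b =>
    Finset.mem_union_right _ (Finset.mem_image_of_mem f (Finset.mem_univ b))
  -- for each group, an embedding of the fill design aligning the holes
  have key : ∀ j : Fin u,
      ∃ F : Fin ((Finset.univ.filter fun x => grp x = j).card + i) → Fin (v + i),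
        Function.Injective F ∧ (∀ p, F p ∈ W' ↔ p ∈ Wf j) ∧ (∀ p, F p ∈ S j) ∧
          (∀ z ∈ S j, ∃ p, F p = z) := by
    intro j
    set G : Finset (Fin v) := Finset.univ.filter fun x => grp x = j with hG
    set T1 : Finset (Fin (v + i)) := (G ∩ H).image e ∪ Finset.univ.image f with hT1
    set T2 : Finset (Fin (v + i)) := (G \ H).image e with hT2
    have hT1card : T1.card = (G ∩ H).card + i := by
      rw [hT1, Finset.card_union_of_disjoint, Finset.card_image_of_injective _ einj,
        Finset.card_image_of_injective _ finj, Finset.card_univ, Fintype.card_fin]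
      rw [Finset.disjoint_left]
      intro z hz1 hz2
      rcases Finset.mem_image.mp hz1 with ⟨a, _, rfl⟩
      rcases Finset.mem_image.mp hz2 with ⟨b, _, hb⟩
      exact hef a b hb.symm
    have hGH : (G ∩ H).card + (G \ H).card = G.card := Finset.card_inter_add_card_sdiff G H
    have hT2card : T2.card = G.card - (G ∩ H).card := by
      rw [hT2, Finset.card_image_of_injective _ einj]
      omega
    have h1 : (Wf j).card = T1.card := by rw [hWcard j, hT1card, ← hG]
    have h2 : ((Wf j)ᶜ).card = T2.card := by
      rw [Finset.card_compl, hWcard j, Fintype.card_fin, hT2card, ← hG]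
      omega
    set e1 := Finset.equivOfCardEq h1 with he1
    set e2 := Finset.equivOfCardEq h2 with he2
    have hd : ∀ z : Fin (v + i), z ∈ T1 → z ∈ T2 → False := by
      intro z hz1 hz2
      rcases Finset.mem_image.mp hz2 with ⟨a, ha, rfl⟩
      rcases Finset.mem_union.mp hz1 with h | h
      · rcases Finset.mem_image.mp h with ⟨w, hw, hwe⟩
        have := einj hwe
        subst this
        exact (Finset.mem_sdiff.mp ha).2 (Finset.mem_inter.mp hw).2
      · rcases Finset.mem_image.mp h with ⟨w, _, hwe⟩
        exact hef a w hwe.symm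
    have hT1W : ∀ z ∈ T1, z ∈ W' := by
      intro z hz
      rcases Finset.mem_union.mp hz with h | h
      · rcases Finset.mem_image.mp h with ⟨w, hw, rfl⟩
        exact (e_mem_W' w).mpr (Finset.mem_inter.mp hw).2
      · exact Finset.mem_union_right _ h
    have hT2W : ∀ z ∈ T2, z ∉ W' := by
      intro z hz hzW
      rcases Finset.mem_image.mp hz with ⟨w, hw, rfl⟩
      exact (Finset.mem_sdiff.mp hw).2 ((e_mem_W' w).mp hzW)
    have hT1S : ∀ z ∈ T1, z ∈ S j := by
      intro z hz
      rcases Finset.mem_union.mp hz with h | h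
      · rcases Finset.mem_image.mp h with ⟨w, hw, rfl⟩
        exact (e_mem_S j w).mpr
          ((Finset.mem_filter.mp (Finset.mem_inter.mp hw).1).2)
      · exact Finset.mem_union_right _ h
    have hT2S : ∀ z ∈ T2, z ∈ S j := by
      intro z hz
      rcases Finset.mem_image.mp hz with ⟨w, hw, rfl⟩
      exact (e_mem_S j w).mpr ((Finset.mem_filter.mp (Finset.mem_sdiff.mp hw).1).2)
    set FF : Fin (G.card + i) → Fin (v + i) := fun p =>
      if hp : p ∈ Wf j then (e1 ⟨p, hp⟩ : Fin (v + i))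
      else (e2 ⟨p, Finset.mem_compl.mpr hp⟩ : Fin (v + i)) with hFF
    refine ⟨FF, ?_, ?_, ?_, ?_⟩
    · -- injective
      intro a b hab
      simp only [hFF] at hab
      by_cases ha : a ∈ Wf j <;> by_cases hb : b ∈ Wf j
      · rw [dif_pos ha, dif_pos hb] at hab
        have := e1.injective (Subtype.coe_injective hab)
        exact congrArg Subtype.val this
      · rw [dif_pos ha, dif_neg hb] at hab
        exfalso
        refine hd (↑(e2 ⟨b, Finset.mem_compl.mpr hb⟩)) ?_
          (e2 ⟨b, Finset.mem_compl.mpr hb⟩).2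
        rw [← hab]
        exact (e1 ⟨a, ha⟩).2
      · rw [dif_neg ha, dif_pos hb] at hab
        exfalso
        refine hd (↑(e1 ⟨b, hb⟩)) (e1 ⟨b, hb⟩).2 ?_
        rw [← hab]
        exact (e2 ⟨a, Finset.mem_compl.mpr ha⟩).2
      · rw [dif_neg ha, dif_neg hb] at hab
        have := e2.injective (Subtype.coe_injective hab)
        exact congrArg Subtype.val this
    · -- hole characterization
      intro p
      simp only [hFF]
      by_cases hp : p ∈ Wf j
      · simp only [dif_pos hp]
        exact ⟨fun _ => hp, fun _ => hT1W _ (e1 ⟨p, hp⟩).2⟩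
      · simp only [dif_neg hp]
        exact ⟨fun h => absurd h (hT2W _ (e2 ⟨p, Finset.mem_compl.mpr hp⟩).2),
          fun h => absurd h hp⟩
    · -- range in S j
      intro p
      simp only [hFF]
      by_cases hp : p ∈ Wf j
      · simp only [dif_pos hp]
        exact hT1S _ (e1 ⟨p, hp⟩).2
      · simp only [dif_neg hp]
        exact hT2S _ (e2 ⟨p, Finset.mem_compl.mpr hp⟩).2
    · -- surjective onto S j
      intro z hz
      have hz' : z ∈ T1 ∨ z ∈ T2 := by
        rcases Finset.mem_union.mp hz with h | h
        · rcases Finset.mem_image.mp h with ⟨w, hw, rfl⟩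
          by_cases hwH : w ∈ H
          · exact Or.inl (Finset.mem_union_left _ (Finset.mem_image_of_mem e
              (Finset.mem_inter.mpr ⟨hw, hwH⟩)))
          · exact Or.inr (Finset.mem_image_of_mem e (Finset.mem_sdiff.mpr ⟨hw, hwH⟩))
        · exact Or.inl (Finset.mem_union_right _ h)
      rcases hz' with hz1 | hz2
      · refine ⟨(e1.symm ⟨z, hz1⟩ : {x // x ∈ Wf j}), ?_⟩
        have hq : ((e1.symm ⟨z, hz1⟩ : {x // x ∈ Wf j}) : Fin _) ∈ Wf j :=
          (e1.symm ⟨z, hz1⟩).2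
        simp only [hFF]
        rw [dif_pos hq]
        have : (⟨((e1.symm ⟨z, hz1⟩ : {x // x ∈ Wf j}) : Fin _), hq⟩ :
            {x // x ∈ Wf j}) = e1.symm ⟨z, hz1⟩ := Subtype.ext rfl
        rw [this, e1.apply_symm_apply]
      · refine ⟨(e2.symm ⟨z, hz2⟩ : {x // x ∈ (Wf j)ᶜ}), ?_⟩
        have hq : ((e2.symm ⟨z, hz2⟩ : {x // x ∈ (Wf j)ᶜ}) : Fin _) ∉ Wf j :=
          Finset.mem_compl.mp (e2.symm ⟨z, hz2⟩).2
        simp only [hFF]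
        rw [dif_neg hq]
        have : (⟨((e2.symm ⟨z, hz2⟩ : {x // x ∈ (Wf j)ᶜ}) : Fin _),
            Finset.mem_compl.mpr hq⟩ : {x // x ∈ (Wf j)ᶜ}) = e2.symm ⟨z, hz2⟩ :=
          Subtype.ext rfl
        rw [this, e2.apply_symm_apply]
  choose F hFinj hFW hFS hFsurj using key
  refine ⟨W', B.map (Finset.image e) + ∑ j : Fin u, (Bf j).map (Finset.image (F j)),
    hW'card, ?_, ?_, ?_⟩
  · -- block sizes
    intro b hb
    rcases Multiset.mem_add.mp hb with hb | hb
    · rcases Multiset.mem_map.mp hb with ⟨b0, hb0, rfl⟩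
      rw [Finset.card_image_of_injective _ einj]
      exact hsz b0 hb0
    · rcases Multiset.mem_sum.mp hb with ⟨j, _, hbj⟩
      rcases Multiset.mem_map.mp hbj with ⟨a, ha, rfl⟩
      rw [Finset.card_image_of_injective _ (hFinj j)]
      exact hBsz j a ha
  · -- blocks meet the hole at most once
    intro b hb x hx y hy hxW hyW
    rcases Multiset.mem_add.mp hb with hb | hb
    · rcases Multiset.mem_map.mp hb with ⟨b0, hb0, rfl⟩
      rcases Finset.mem_image.mp hx with ⟨x', hx', rfl⟩
      rcases Finset.mem_image.mp hy with ⟨y', hy', rfl⟩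
      have hxH : x' ∈ H := (e_mem_W' x').mp hxW
      have hyH : y' ∈ H := (e_mem_W' y').mp hyW
      by_contra hne
      have hne' : x' ≠ y' := fun h => hne (congrArg e h)
      have := hholes x' y' hne' hxH hyH
      exact absurd ⟨hx', hy'⟩ (Multiset.countP_eq_zero.mp this b0 hb0)
    · rcases Multiset.mem_sum.mp hb with ⟨j, _, hbj⟩
      rcases Multiset.mem_map.mp hbj with ⟨a, ha, rfl⟩
      rcases Finset.mem_image.mp hx with ⟨p, hp, rfl⟩
      rcases Finset.mem_image.mp hy with ⟨q, hq, rfl⟩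
      exact congrArg (F j)
        (hBhole j a ha p hp q hq ((hFW j p).mp hxW) ((hFW j q).mp hyW))
  · -- pair coverage
    intro x y hxy hW
    rw [Multiset.countP_add, countP_sum_aux]
    -- count-zero helper for groups not containing both points
    have cnt0 : ∀ j : Fin u, (x ∉ S j ∨ y ∉ S j) →
        Multiset.countP (fun s => x ∈ s ∧ y ∈ s) ((Bf j).map (Finset.image (F j))) = 0 := by
      intro j hj
      rw [Multiset.countP_eq_zero]
      rintro b hb ⟨hxb, hyb⟩
      rcases Multiset.mem_map.mp hb with ⟨a, _, rfl⟩
      rcases Finset.mem_image.mp hxb with ⟨p, _, rfl⟩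
      rcases Finset.mem_image.mp hyb with ⟨q, _, hqy⟩
      rcases hj with hj | hj
      · exact hj (hFS j p)
      · exact hj (hqy ▸ hFS j q)
    -- main computation when x is an old point
    have main : ∀ (x y : Fin (v + i)), x ≠ y → ¬(x ∈ W' ∧ y ∈ W') → (x : ℕ) < v →
        Multiset.countP (fun s => x ∈ s ∧ y ∈ s) (B.map (Finset.image e)) +
          ∑ j : Fin u,
            Multiset.countP (fun s => x ∈ s ∧ y ∈ s) ((Bf j).map (Finset.image (F j))) = 1 := by
      intro x y hxy hW hx
      have cnt0 : ∀ j : Fin u, (x ∉ S j ∨ y ∉ S j) →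
          Multiset.countP (fun s => x ∈ s ∧ y ∈ s) ((Bf j).map (Finset.image (F j))) = 0 := by
        intro j hj
        rw [Multiset.countP_eq_zero]
        rintro b hb ⟨hxb, hyb⟩
        rcases Multiset.mem_map.mp hb with ⟨a, _, rfl⟩
        rcases Finset.mem_image.mp hxb with ⟨p, _, rfl⟩
        rcases Finset.mem_image.mp hyb with ⟨q, _, hqy⟩
        rcases hj with hj | hj
        · exact hj (hFS j p)
        · exact hj (hqy ▸ hFS j q)
      obtain ⟨x', rfl⟩ : ∃ a : Fin v, e a = x := ⟨⟨x.1, hx⟩, Fin.ext rfl⟩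
      by_cases hy : (y : ℕ) < v
      · -- both old
        obtain ⟨y', rfl⟩ : ∃ a : Fin v, e a = y := ⟨⟨y.1, hy⟩, Fin.ext rfl⟩
        have hne : x' ≠ y' := fun h => hxy (congrArg e h)
        by_cases hg : grp x' = grp y'
        · -- same group: covered by the fill of that group
          have hold : Multiset.countP (fun s => e x' ∈ s ∧ e y' ∈ s)
              (B.map (Finset.image e)) = 0 := by
            rw [countP_map_pair_s9 e einj, Multiset.countP_eq_zero]
            rintro b0 hb0 ⟨h1, h2⟩
            exact hne (hmeet b0 hb0 x' h1 y' h2 hg)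
          rw [hold, zero_add]
          rw [Finset.sum_eq_single_of_mem (grp x') (Finset.mem_univ _)]
          · obtain ⟨p, hp⟩ := hFsurj (grp x') (e x') ((e_mem_S _ x').mpr rfl)
            obtain ⟨q, hq⟩ := hFsurj (grp x') (e y') ((e_mem_S _ y').mpr hg.symm)
            rw [← hp, ← hq, countP_map_pair_s9 (F (grp x')) (hFinj (grp x'))]
            apply hBcov
            · intro h
              exact hxy (by rw [← hp, ← hq, h])
            · rintro ⟨h1, h2⟩
              refine hW ⟨?_, ?_⟩
              · have := (hFW _ p).mpr h1
                rwa [hp] at this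
              · have := (hFW _ q).mpr h2
                rwa [hq] at this
          · intro j _ hj
            exact cnt0 j (Or.inl fun h => hj ((e_mem_S j x').mp h).symm)
        · -- different groups: covered by the GDD
          have hold : Multiset.countP (fun s => e x' ∈ s ∧ e y' ∈ s)
              (B.map (Finset.image e)) = 1 := by
            rw [countP_map_pair_s9 e einj]
            apply hcov x' y' hg
            rintro ⟨h1, h2⟩
            exact hW ⟨(e_mem_W' x').mpr h1, (e_mem_W' y').mpr h2⟩
          rw [hold]
          have : ∀ j ∈ Finset.univ, Multiset.countP (fun s => e x' ∈ s ∧ e y' ∈ s)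
              ((Bf j).map (Finset.image (F j))) = 0 := by
            intro j _
            by_cases hjx : grp x' = j
            · refine cnt0 j (Or.inr fun h => hg ?_)
              rw [(e_mem_S j y').mp h, hjx]
            · exact cnt0 j (Or.inl fun h => hjx ((e_mem_S j x').mp h))
          rw [Finset.sum_eq_zero this]
          rfl
      · -- x old, y new
        obtain ⟨b, rfl⟩ : ∃ b : Fin i, f b = y := by
          refine ⟨⟨(y : ℕ) - v, by omega⟩, Fin.ext ?_⟩
          simp only [hf]
          omega
        have hxH : x' ∉ H := fun h => hW ⟨(e_mem_W' x').mpr h, f_mem_W' b⟩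
        have hold : Multiset.countP (fun s => e x' ∈ s ∧ f b ∈ s)
            (B.map (Finset.image e)) = 0 := by
          rw [Multiset.countP_eq_zero]
          rintro s hs ⟨_, h2⟩
          rcases Multiset.mem_map.mp hs with ⟨b0, _, rfl⟩
          rcases Finset.mem_image.mp h2 with ⟨w, _, hwe⟩
          exact hef w b hwe
        rw [hold, zero_add]
        rw [Finset.sum_eq_single_of_mem (grp x') (Finset.mem_univ _)]
        · obtain ⟨p, hp⟩ := hFsurj (grp x') (e x') ((e_mem_S _ x').mpr rfl)
          obtain ⟨q, hq⟩ := hFsurj (grp x') (f b) (f_mem_S _ b)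
          rw [← hp, ← hq, countP_map_pair_s9 (F (grp x')) (hFinj (grp x'))]
          apply hBcov
          · intro h
            exact hxy (by rw [← hp, ← hq, h])
          · rintro ⟨h1, _⟩
            have := (hFW _ p).mpr h1
            rw [hp] at this
            exact hxH ((e_mem_W' x').mp this)
        · intro j _ hj
          exact cnt0 j (Or.inl fun h => hj ((e_mem_S j x').mp h).symm)
    by_cases hx : (x : ℕ) < v
    · exact main x y hxy hW hx
    · by_cases hy : (y : ℕ) < v
      · have swap1 : Multiset.countP (fun s => x ∈ s ∧ y ∈ s) (B.map (Finset.image e)) =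
            Multiset.countP (fun s => y ∈ s ∧ x ∈ s) (B.map (Finset.image e)) :=
          Multiset.countP_congr rfl fun s _ => propext and_comm
        have swap2 : ∀ j : Fin u,
            Multiset.countP (fun s => x ∈ s ∧ y ∈ s) ((Bf j).map (Finset.image (F j))) =
            Multiset.countP (fun s => y ∈ s ∧ x ∈ s) ((Bf j).map (Finset.image (F j))) :=
          fun j => Multiset.countP_congr rfl fun s _ => propext and_comm
        rw [swap1, Finset.sum_congr rfl fun j _ => swap2 j]
        exact main y x hxy.symm (fun ⟨h1, h2⟩ => hW ⟨h2, h1⟩) hy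
      · -- both new: impossible, both are hole points
        exfalso
        obtain ⟨a, rfl⟩ : ∃ a : Fin i, f a = x := by
          refine ⟨⟨(x : ℕ) - v, by omega⟩, Fin.ext ?_⟩
          simp only [hf]
          omega
        obtain ⟨b, rfl⟩ : ∃ b : Fin i, f b = y := by
          refine ⟨⟨(y : ℕ) - v, by omega⟩, Fin.ext ?_⟩
          simp only [hf]
          omega
        exact hW ⟨f_mem_W' a, f_mem_W' b⟩
end

section
/- Suppose there exists an IPBD((n;m), K), and for each k ∈ K there exist t mutually orthogonal idempotent latin squares of order k. Then there exist t mutually orthogonal incomplete latin squares of order n with a common hole of order m (t-IMOLS(n;m)). -/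
/-- `L` is a latin square of order `k`. -/
def IsLatin {k : ℕ} (L : Fin k → Fin k → Fin k) : Prop :=
  (∀ i, Function.Injective fun j => L i j) ∧ (∀ j, Function.Injective fun i => L i j)

/-- Two latin squares of order `k` are orthogonal. -/
def OrthLS {k : ℕ} (L L' : Fin k → Fin k → Fin k) : Prop :=
  Function.Bijective fun p : Fin k × Fin k => (L p.1 p.2, L' p.1 p.2)

open Classical in
/-- The symbol placed in cell `(i,j)` by the latin square living on block `b`. -/
noncomputable def auxVal {n t : ℕ} {K : Set ℕ}
    (Msq : ∀ k, k ∈ K → Fin t → Fin k → Fin k → Fin k)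
    (b : Finset (Fin n)) (a : Fin t) (i j : Fin n) : Fin n :=
  if h : b.card ∈ K ∧ i ∈ b ∧ j ∈ b then
    ((b.equivFin.symm
      (Msq b.card h.1 a (b.equivFin ⟨i, h.2.1⟩) (b.equivFin ⟨j, h.2.2⟩)) : b) : Fin n)
  else i

/-- The incomplete latin squares constructed from an IPBD. -/
noncomputable def auxL {n t : ℕ} {K : Set ℕ}
    (Msq : ∀ k, k ∈ K → Fin t → Fin k → Fin k → Fin k)
    (W : Finset (Fin n)) (blk : Fin n → Fin n → Finset (Fin n))
    (a : Fin t) (i j : Fin n) : Option (Fin n) :=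
  if i ∈ W ∧ j ∈ W then none
  else if i = j then some i
  else some (auxVal Msq (blk i j) a i j)

/-- If an `IPBD((n;m),K)` exists and for each `k ∈ K` there are `t` mutually
orthogonal idempotent latin squares of order `k`, then `t`-IMOLS`(n;m)` exist. -/
theorem ipbd_to_imols (t n m : ℕ) (K : Set ℕ)
    (hIPBD : IPBDExists n m K)
    (hMOLS : ∀ k ∈ K, ∃ L : Fin t → Fin k → Fin k → Fin k,
      (∀ a, IsLatin (L a) ∧ ∀ i, L a i i = i) ∧
      (∀ a b, a ≠ b → OrthLS (L a) (L b))) :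
    ∃ (M : Finset (Fin n)) (L : Fin t → Fin n → Fin n → Option (Fin n)),
      M.card = m ∧ (∀ a, IsILS M (L a)) ∧
      (∀ a b, a ≠ b → OrthILS M (L a) (L b)) := by
  classical
  obtain ⟨W, B, hWcard, hBK, hHole, hPair⟩ := hIPBD
  choose Msq hMsq using hMOLS
  -- a block covering each admissible pair
  have hcov : ∀ x y : Fin n, ∃ b : Finset (Fin n),
      x ≠ y → ¬(x ∈ W ∧ y ∈ W) → b ∈ B ∧ x ∈ b ∧ y ∈ b := by
    intro x y
    by_cases h : x ≠ y ∧ ¬(x ∈ W ∧ y ∈ W)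
    · have h1 := hPair x y h.1 h.2
      have hpos : 0 < Multiset.countP (fun s => x ∈ s ∧ y ∈ s) B := by omega
      rw [Multiset.countP_pos] at hpos
      obtain ⟨b, hb, hx, hy⟩ := hpos
      exact ⟨b, fun _ _ => ⟨hb, hx, hy⟩⟩
    · exact ⟨∅, fun h1 h2 => absurd ⟨h1, h2⟩ h⟩
  choose blk hblk using hcov
  -- the covering block is unique
  have hUniq : ∀ x y : Fin n, x ≠ y → ¬(x ∈ W ∧ y ∈ W) →
      ∀ b, b ∈ B → x ∈ b → y ∈ b → b = blk x y := by
    intro x y hxy hW b hb hx hy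
    have h1 := hPair x y hxy hW
    rw [Multiset.countP_eq_card_filter, Multiset.card_eq_one] at h1
    obtain ⟨c, hc⟩ := h1
    have hbc : b = c := by
      have hm : b ∈ Multiset.filter (fun s => x ∈ s ∧ y ∈ s) B :=
        Multiset.mem_filter.2 ⟨hb, hx, hy⟩
      rw [hc, Multiset.mem_singleton] at hm
      exact hm
    obtain ⟨hb', hx', hy'⟩ := hblk x y hxy hW
    have hbc' : blk x y = c := by
      have hm : blk x y ∈ Multiset.filter (fun s => x ∈ s ∧ y ∈ s) B :=
        Multiset.mem_filter.2 ⟨hb', hx', hy'⟩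
      rw [hc, Multiset.mem_singleton] at hm
      exact hm
    rw [hbc, hbc']
  -- specification of auxVal
  have hspec : ∀ (b : Finset (Fin n)) (hk : b.card ∈ K) (a : Fin t) (i j : Fin n)
      (hi : i ∈ b) (hj : j ∈ b),
      ∃ hs : auxVal Msq b a i j ∈ b,
        b.equivFin ⟨auxVal Msq b a i j, hs⟩ =
          Msq b.card hk a (b.equivFin ⟨i, hi⟩) (b.equivFin ⟨j, hj⟩) := by
    intro b hk a i j hi hj
    have h : b.card ∈ K ∧ i ∈ b ∧ j ∈ b := ⟨hk, hi, hj⟩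
    unfold auxVal
    rw [dif_pos h]
    exact ⟨(b.equivFin.symm _).2, b.equivFin.apply_symm_apply _⟩
  have hmem : ∀ (b : Finset (Fin n)) (hk : b.card ∈ K) (a : Fin t) (i j : Fin n)
      (hi : i ∈ b) (hj : j ∈ b), auxVal Msq b a i j ∈ b :=
    fun b hk a i j hi hj => (hspec b hk a i j hi hj).elim fun hs _ => hs
  -- idempotence of auxVal on the diagonal
  have hdiag : ∀ (b : Finset (Fin n)) (hk : b.card ∈ K) (a : Fin t) (i : Fin n)
      (hi : i ∈ b), auxVal Msq b a i i = i := by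
    intro b hk a i hi
    obtain ⟨hs, hes⟩ := hspec b hk a i i hi hi
    rw [((hMsq b.card hk).1 a).2 _] at hes
    have := b.equivFin.injective hes
    exact congrArg Subtype.val this
  -- row injectivity within a block
  have hrowblk : ∀ (b : Finset (Fin n)) (hk : b.card ∈ K) (a : Fin t) (i j j' : Fin n)
      (hi : i ∈ b) (hj : j ∈ b) (hj' : j' ∈ b),
      auxVal Msq b a i j = auxVal Msq b a i j' → j = j' := by
    intro b hk a i j j' hi hj hj' heq
    obtain ⟨hs, hes⟩ := hspec b hk a i j hi hj
    obtain ⟨hs', hes'⟩ := hspec b hk a i j' hi hj'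
    have h12 : (⟨auxVal Msq b a i j, hs⟩ : b) = ⟨auxVal Msq b a i j', hs'⟩ :=
      Subtype.ext heq
    rw [h12, hes'] at hes
    have h3 := ((hMsq b.card hk).1 a).1.1 (b.equivFin ⟨i, hi⟩) hes
    have h4 := b.equivFin.injective h3
    exact (congrArg Subtype.val h4).symm
  -- column injectivity within a block
  have hcolblk : ∀ (b : Finset (Fin n)) (hk : b.card ∈ K) (a : Fin t) (i i' j : Fin n)
      (hi : i ∈ b) (hi' : i' ∈ b) (hj : j ∈ b),
      auxVal Msq b a i j = auxVal Msq b a i' j → i = i' := by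
    intro b hk a i i' j hi hi' hj heq
    obtain ⟨hs, hes⟩ := hspec b hk a i j hi hj
    obtain ⟨hs', hes'⟩ := hspec b hk a i' j hi' hj
    have h12 : (⟨auxVal Msq b a i j, hs⟩ : b) = ⟨auxVal Msq b a i' j, hs'⟩ :=
      Subtype.ext heq
    rw [h12, hes'] at hes
    have h3 := ((hMsq b.card hk).1 a).1.2 (b.equivFin ⟨j, hj⟩) hes
    have h4 := b.equivFin.injective h3
    exact (congrArg Subtype.val h4).symm
  -- orthogonality within a block (injectivity form)
  have horthinj : ∀ (b : Finset (Fin n)) (hk : b.card ∈ K) (a a' : Fin t), a ≠ a' →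
      ∀ (i j i' j' : Fin n) (hi : i ∈ b) (hj : j ∈ b) (hi' : i' ∈ b) (hj' : j' ∈ b),
      auxVal Msq b a i j = auxVal Msq b a i' j' →
      auxVal Msq b a' i j = auxVal Msq b a' i' j' → i = i' ∧ j = j' := by
    intro b hk a a' hne i j i' j' hi hj hi' hj' h1 h2
    obtain ⟨hs1, hes1⟩ := hspec b hk a i j hi hj
    obtain ⟨hs1', hes1'⟩ := hspec b hk a i' j' hi' hj'
    obtain ⟨hs2, hes2⟩ := hspec b hk a' i j hi hj
    obtain ⟨hs2', hes2'⟩ := hspec b hk a' i' j' hi' hj'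
    have e1 : Msq b.card hk a (b.equivFin ⟨i, hi⟩) (b.equivFin ⟨j, hj⟩) =
        Msq b.card hk a (b.equivFin ⟨i', hi'⟩) (b.equivFin ⟨j', hj'⟩) := by
      rw [← hes1, ← hes1']
      exact congrArg b.equivFin (Subtype.ext h1)
    have e2 : Msq b.card hk a' (b.equivFin ⟨i, hi⟩) (b.equivFin ⟨j, hj⟩) =
        Msq b.card hk a' (b.equivFin ⟨i', hi'⟩) (b.equivFin ⟨j', hj'⟩) := by
      rw [← hes2, ← hes2']
      exact congrArg b.equivFin (Subtype.ext h2)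
    have h3 := ((hMsq b.card hk).2 a a' hne).injective
      (a₁ := (b.equivFin ⟨i, hi⟩, b.equivFin ⟨j, hj⟩))
      (a₂ := (b.equivFin ⟨i', hi'⟩, b.equivFin ⟨j', hj'⟩))
      (by simpa using ⟨e1, e2⟩)
    have h4 : b.equivFin ⟨i, hi⟩ = b.equivFin ⟨i', hi'⟩ := congrArg Prod.fst h3
    have h5 : b.equivFin ⟨j, hj⟩ = b.equivFin ⟨j', hj'⟩ := congrArg Prod.snd h3
    exact ⟨congrArg Subtype.val (b.equivFin.injective h4),
      congrArg Subtype.val (b.equivFin.injective h5)⟩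
  -- orthogonality within a block (surjectivity form)
  have horthsurj : ∀ (b : Finset (Fin n)) (hk : b.card ∈ K) (a a' : Fin t), a ≠ a' →
      ∀ (p q : Fin n) (hp : p ∈ b) (hq : q ∈ b),
      ∃ i j : Fin n, i ∈ b ∧ j ∈ b ∧ auxVal Msq b a i j = p ∧ auxVal Msq b a' i j = q := by
    intro b hk a a' hne p q hp hq
    obtain ⟨⟨x, y⟩, hxy⟩ := ((hMsq b.card hk).2 a a' hne).surjective
      (b.equivFin ⟨p, hp⟩, b.equivFin ⟨q, hq⟩)
    refine ⟨(b.equivFin.symm x : b), (b.equivFin.symm y : b),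
      (b.equivFin.symm x).2, (b.equivFin.symm y).2, ?_, ?_⟩
    · obtain ⟨hs, hes⟩ := hspec b hk a _ _ (b.equivFin.symm x).2 (b.equivFin.symm y).2
      have hx' : (⟨((b.equivFin.symm x : b) : Fin n), (b.equivFin.symm x).2⟩ : b)
          = b.equivFin.symm x := rfl
      have hy' : (⟨((b.equivFin.symm y : b) : Fin n), (b.equivFin.symm y).2⟩ : b)
          = b.equivFin.symm y := rfl
      rw [hx', hy', b.equivFin.apply_symm_apply, b.equivFin.apply_symm_apply] at hes
      have hfst : Msq b.card hk a x y = b.equivFin ⟨p, hp⟩ := congrArg Prod.fst hxy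
      rw [hfst] at hes
      exact congrArg Subtype.val (b.equivFin.injective hes)
    · obtain ⟨hs, hes⟩ := hspec b hk a' _ _ (b.equivFin.symm x).2 (b.equivFin.symm y).2
      have hx' : (⟨((b.equivFin.symm x : b) : Fin n), (b.equivFin.symm x).2⟩ : b)
          = b.equivFin.symm x := rfl
      have hy' : (⟨((b.equivFin.symm y : b) : Fin n), (b.equivFin.symm y).2⟩ : b)
          = b.equivFin.symm y := rfl
      rw [hx', hy', b.equivFin.apply_symm_apply, b.equivFin.apply_symm_apply] at hes
      have hsnd : Msq b.card hk a' x y = b.equivFin ⟨q, hq⟩ := congrArg Prod.snd hxy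
      rw [hsnd] at hes
      exact congrArg Subtype.val (b.equivFin.injective hes)
  -- inversion for auxL
  have hinv : ∀ (a : Fin t) (i j s : Fin n), auxL Msq W blk a i j = some s →
      (i = j ∧ i ∉ W ∧ s = i) ∨
      (i ≠ j ∧ ¬(i ∈ W ∧ j ∈ W) ∧ s = auxVal Msq (blk i j) a i j) := by
    intro a i j s h
    unfold auxL at h
    by_cases hw : i ∈ W ∧ j ∈ W
    · rw [if_pos hw] at h; exact absurd h (by simp)
    · rw [if_neg hw] at h
      by_cases hij : i = j
      · rw [if_pos hij] at h
        exact Or.inl ⟨hij, fun hiW => hw ⟨hiW, hij ▸ hiW⟩, (Option.some_injective _ h).symm⟩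
      · rw [if_neg hij] at h
        exact Or.inr ⟨hij, hw, (Option.some_injective _ h).symm⟩
  have hLdiag : ∀ (a : Fin t) (i : Fin n), i ∉ W → auxL Msq W blk a i i = some i := by
    intro a i h; simp [auxL, h]
  have hLblk : ∀ (a : Fin t) (i j : Fin n), i ≠ j → ¬(i ∈ W ∧ j ∈ W) →
      auxL Msq W blk a i j = some (auxVal Msq (blk i j) a i j) := by
    intro a i j h1 h2; simp [auxL, h1, h2]
  -- s ≠ i and s ≠ j for block values
  have hne_i : ∀ (b : Finset (Fin n)) (hk : b.card ∈ K) (a : Fin t) (i j : Fin n)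
      (hi : i ∈ b) (hj : j ∈ b), i ≠ j → auxVal Msq b a i j ≠ i := by
    intro b hk a i j hi hj hij heq
    exact hij ((hrowblk b hk a i j i hi hj hi (heq.trans (hdiag b hk a i hi).symm))).symm
  have hne_j : ∀ (b : Finset (Fin n)) (hk : b.card ∈ K) (a : Fin t) (i j : Fin n)
      (hi : i ∈ b) (hj : j ∈ b), i ≠ j → auxVal Msq b a i j ≠ j := by
    intro b hk a i j hi hj hij heq
    exact hij (hcolblk b hk a i j j hi hj hj (heq.trans (hdiag b hk a j hj).symm))
  -- only on the diagonal can two different squares agree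
  have hdiagonly : ∀ (b : Finset (Fin n)) (hk : b.card ∈ K) (a a' : Fin t), a ≠ a' →
      ∀ (i j p : Fin n) (hi : i ∈ b) (hj : j ∈ b),
      auxVal Msq b a i j = p → auxVal Msq b a' i j = p → i = j := by
    intro b hk a a' hne i j p hi hj h1 h2
    have hp : p ∈ b := h1 ▸ hmem b hk a i j hi hj
    have h3 := horthinj b hk a a' hne i j p p hi hj hp hp
      (h1.trans (hdiag b hk a p hp).symm) (h2.trans (hdiag b hk a' p hp).symm)
    exact h3.1.trans h3.2.symm
  refine ⟨W, auxL Msq W blk, hWcard, ?_, ?_⟩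
  · -- each square is an ILS
    intro a
    refine ⟨?_, ?_, ?_, ?_⟩
    · -- none iff hole
      intro i j
      constructor
      · intro h
        by_contra hw
        rcases (by tauto : ¬ (i ∈ W) ∨ ¬ (j ∈ W) ∨ ¬ (i ∈ W ∧ j ∈ W)) with h' | h' | h' <;>
        · unfold auxL at h
          rw [if_neg (by tauto)] at h
          by_cases hij : i = j <;> simp [hij] at h
      · intro h; unfold auxL; rw [if_pos h]
    · -- row latin
      intro i j j' s h1 h2
      rcases hinv a i j s h1 with ⟨hij0, hiW, hs0⟩ | ⟨hij, hw, hs1⟩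
      · rcases hinv a i j' s h2 with ⟨hij0', _, _⟩ | ⟨hij', hw', hs2⟩
        · exact hij0.symm.trans hij0'
        · obtain ⟨hbB, hib, hjb⟩ := hblk i j' hij' hw'
          exact absurd (hs2.symm.trans hs0) (hne_i _ (hBK _ hbB) a i j' hib hjb hij')
      · obtain ⟨hbB, hib, hjb⟩ := hblk i j hij hw
        rcases hinv a i j' s h2 with ⟨hij0', hiW', hs0'⟩ | ⟨hij', hw', hs2⟩
        · exact absurd (hs1.symm.trans hs0') (hne_i _ (hBK _ hbB) a i j hib hjb hij)
        · obtain ⟨hbB', hib', hjb'⟩ := hblk i j' hij' hw'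
          have hk := hBK _ hbB
          have hk' := hBK _ hbB'
          have hsb : s ∈ blk i j := hs1 ▸ hmem _ hk a i j hib hjb
          have hsb' : s ∈ blk i j' := hs2 ▸ hmem _ hk' a i j' hib' hjb'
          have hsi : s ≠ i := hs1 ▸ hne_i _ hk a i j hib hjb hij
          have hWis : ¬(i ∈ W ∧ s ∈ W) := fun ⟨h1w, h2w⟩ =>
            hsi (hHole _ hbB s hsb i hib h2w h1w)
          have e1 : blk i j = blk i s := hUniq i s (Ne.symm hsi) hWis _ hbB hib hsb
          have e2 : blk i j' = blk i s := hUniq i s (Ne.symm hsi) hWis _ hbB' hib' hsb'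
          have ebb : blk i j = blk i j' := e1.trans e2.symm
          rw [← ebb] at hs2 hjb'
          exact hrowblk _ hk a i j j' hib hjb hjb' (hs1.symm.trans hs2)
    · -- column latin
      intro i i' j s h1 h2
      rcases hinv a i j s h1 with ⟨hij0, hiW, hs0⟩ | ⟨hij, hw, hs1⟩
      · rcases hinv a i' j s h2 with ⟨hij0', _, _⟩ | ⟨hij', hw', hs2⟩
        · exact hij0.trans hij0'.symm
        · obtain ⟨hbB, hib, hjb⟩ := hblk i' j hij' hw'
          exact absurd (hs2.symm.trans (hs0.trans hij0))
            (hne_j _ (hBK _ hbB) a i' j hib hjb hij')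
      · obtain ⟨hbB, hib, hjb⟩ := hblk i j hij hw
        rcases hinv a i' j s h2 with ⟨hij0', hiW', hs0'⟩ | ⟨hij', hw', hs2⟩
        · exact absurd (hs1.symm.trans (hs0'.trans hij0'))
            (hne_j _ (hBK _ hbB) a i j hib hjb hij)
        · obtain ⟨hbB', hib', hjb'⟩ := hblk i' j hij' hw'
          have hk := hBK _ hbB
          have hk' := hBK _ hbB'
          have hsb : s ∈ blk i j := hs1 ▸ hmem _ hk a i j hib hjb
          have hsb' : s ∈ blk i' j := hs2 ▸ hmem _ hk' a i' j hib' hjb'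
          have hsj : s ≠ j := hs1 ▸ hne_j _ hk a i j hib hjb hij
          have hWjs : ¬(j ∈ W ∧ s ∈ W) := fun ⟨h1w, h2w⟩ =>
            hsj (hHole _ hbB s hsb j hjb h2w h1w)
          have e1 : blk i j = blk j s := hUniq j s (Ne.symm hsj) hWjs _ hbB hjb hsb
          have e2 : blk i' j = blk j s := hUniq j s (Ne.symm hsj) hWjs _ hbB' hjb' hsb'
          have ebb : blk i j = blk i' j := e1.trans e2.symm
          rw [← ebb] at hs2 hib'
          exact hcolblk _ hk a i i' j hib hib' hjb (hs1.symm.trans hs2)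
    · -- no hole symbol in hole rows/columns
      intro i j s hsW hij h
      rcases hinv a i j s h with ⟨hij0, hiW, hs0⟩ | ⟨hij', hw, hs1⟩
      · rcases hij with h' | h'
        · exact hiW h'
        · exact hiW (hij0.symm ▸ h')
      · obtain ⟨hbB, hib, hjb⟩ := hblk i j hij' hw
        have hk := hBK _ hbB
        have hsb : s ∈ blk i j := hs1 ▸ hmem _ hk a i j hib hjb
        rcases hij with h' | h'
        · exact (hs1 ▸ hne_i _ hk a i j hib hjb hij') (hHole _ hbB s hsb i hib hsW h')
        · exact (hs1 ▸ hne_j _ hk a i j hib hjb hij') (hHole _ hbB s hsb j hjb hsW h')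
  · -- orthogonality
    intro a a' hne p q hpq
    by_cases hpq' : p = q
    · subst hpq'
      have hpW : p ∉ W := fun h => hpq ⟨h, h⟩
      refine ⟨(p, p), ⟨hLdiag a p hpW, hLdiag a' p hpW⟩, ?_⟩
      rintro ⟨i, j⟩ ⟨h1, h2⟩
      rcases hinv a i j p h1 with ⟨hij0, hiW, hs0⟩ | ⟨hij, hw, hs1⟩
      · exact Prod.ext hs0.symm (hij0.symm.trans hs0.symm)
      · rcases hinv a' i j p h2 with ⟨h', _, _⟩ | ⟨_, _, hs2⟩
        · exact absurd h' hij
        · exact absurd (hdiagonly _ (hBK _ (hblk i j hij hw).1) a a' hne i j p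
            (hblk i j hij hw).2.1 (hblk i j hij hw).2.2 hs1.symm hs2.symm) hij
    · obtain ⟨hb0, hp0, hq0⟩ := hblk p q hpq' hpq
      have hk0 := hBK _ hb0
      obtain ⟨i, j, hi, hj, h1, h2⟩ := horthsurj _ hk0 a a' hne p q hp0 hq0
      have hij : i ≠ j := by
        rintro rfl
        exact hpq' ((h1.symm.trans (hdiag _ hk0 a i hi)).trans
          (h2.symm.trans (hdiag _ hk0 a' i hi)).symm)
      have hWij : ¬(i ∈ W ∧ j ∈ W) := fun ⟨h1', h2'⟩ =>
        hij (hHole _ hb0 i hi j hj h1' h2')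
      have hb0' : blk p q = blk i j := hUniq i j hij hWij _ hb0 hi hj
      refine ⟨(i, j), ⟨?_, ?_⟩, ?_⟩
      · rw [hLblk a i j hij hWij, ← hb0', h1]
      · rw [hLblk a' i j hij hWij, ← hb0', h2]
      · rintro ⟨i', j'⟩ ⟨g1, g2⟩
        rcases hinv a i' j' p g1 with ⟨hij0, hiW, hs0⟩ | ⟨hij', hw', hs1⟩
        · rcases hinv a' i' j' q g2 with ⟨_, _, hq'⟩ | ⟨h', _, _⟩
          · exact absurd (hs0.trans hq'.symm) hpq'
          · exact absurd hij0 h'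
        · rcases hinv a' i' j' q g2 with ⟨h', _, _⟩ | ⟨_, _, hs2⟩
          · exact absurd h' hij'
          · obtain ⟨hbB', hi', hj'⟩ := hblk i' j' hij' hw'
            have hk' := hBK _ hbB'
            have hpb' : p ∈ blk i' j' := hs1 ▸ hmem _ hk' a i' j' hi' hj'
            have hqb' : q ∈ blk i' j' := hs2 ▸ hmem _ hk' a' i' j' hi' hj'
            have ebb : blk i' j' = blk p q := hUniq p q hpq' hpq _ hbB' hpb' hqb'
            rw [ebb] at hs1 hs2 hi' hj'
            have h3 := horthinj _ hk0 a a' hne i' j' i j hi' hj' hi hj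
              (hs1.symm.trans h1.symm) (hs2.symm.trans h2.symm)
            exact Prod.ext h3.1 h3.2
end

section
/- In an IPBD((v;w),K) with v > w and k = min K, equality v = (k-1)w + 1 holds if and only if every block has size exactly k and every block intersects the hole. -/
open Finset

lemma swap_count {α β : Type*} (s : Finset α) (B : Multiset β)
    (p : α → β → Prop) [∀ y b, Decidable (p y b)] :
    ∑ y ∈ s, B.countP (fun b => p y b) =
      (B.map (fun b => (s.filter (fun y => p y b)).card)).sum := by
  induction B using Multiset.induction_on with
  | empty => simp
  | cons b B ih =>
    simp only [Multiset.countP_cons, Multiset.map_cons, Multiset.sum_cons,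
      Finset.sum_add_distrib, ih]
    rw [add_comm]
    congr 1
    rw [Finset.card_filter]

/-- Equality case of the hole-size bound: in an `IPBD((v;w),K)` with `v > w` and
`k = min K`, one has `v = (k-1)w + 1` if and only if every block has size exactly
`k` and every block intersects the hole. -/
theorem ipbd_hole_size_equality (v w : ℕ) (hvw : w < v)
    (K : Set ℕ) (hK : ∀ j ∈ K, 2 ≤ j)
    (k : ℕ) (hkK : k ∈ K) (hkmin : ∀ j ∈ K, k ≤ j)
    (W : Finset (Fin v)) (hW : W.card = w)
    (B : Multiset (Finset (Fin v)))
    (hsz : ∀ b ∈ B, b.card ∈ K)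
    (hhole : ∀ b ∈ B, ∀ x ∈ b, ∀ y ∈ b, x ∈ W → y ∈ W → x = y)
    (hcov : ∀ x y : Fin v, x ≠ y → ¬(x ∈ W ∧ y ∈ W) →
      Multiset.countP (fun s => x ∈ s ∧ y ∈ s) B = 1) :
    v = (k - 1) * w + 1 ↔ (∀ b ∈ B, b.card = k ∧ (b ∩ W).Nonempty) := by
  have hk2 : 2 ≤ k := hK k hkK
  -- each block meets the hole in at most one point
  have hWcap : ∀ b ∈ B, (W ∩ b).card ≤ 1 := by
    intro b hb
    apply Finset.card_le_one.2
    intro a ha c hc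
    simp only [Finset.mem_inter] at ha hc
    exact hhole b hb a ha.2 c hc.2 ha.1 hc.1
  -- the two counting identities, for any point x outside the hole
  have hsum : ∀ x : Fin v, x ∉ W →
      ((B.map (fun b => if x ∈ b then b.card - 1 else 0)).sum = v - 1 ∧
       (B.map (fun b => if x ∈ b then (W ∩ b).card else 0)).sum = w) := by
    intro x hx
    constructor
    · have h1 : ∑ y ∈ (univ : Finset (Fin v)).erase x,
          B.countP (fun b => x ∈ b ∧ y ∈ b) = v - 1 := by
        rw [Finset.sum_congr rfl (fun y hy => by
          have hyx : y ≠ x := (Finset.mem_erase.1 hy).1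
          exact hcov x y hyx.symm (fun h => hx h.1))]
        simp [Finset.card_erase_of_mem]
      rw [swap_count] at h1
      rw [← h1]
      congr 1
      apply Multiset.map_congr rfl
      intro b _
      by_cases hxb : x ∈ b
      · simp only [hxb, true_and, if_pos]
        have he : ((univ : Finset (Fin v)).erase x).filter (fun y => y ∈ b)
            = b.erase x := by
          ext y
          simp [Finset.mem_erase, and_comm]
        rw [he, Finset.card_erase_of_mem hxb]
      · simp [hxb]
    · have h2 : ∑ y ∈ W, B.countP (fun b => x ∈ b ∧ y ∈ b) = w := by
        rw [Finset.sum_congr rfl (fun y hy => by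
          have hyx : x ≠ y := fun h => hx (h ▸ hy)
          exact hcov x y hyx (fun h => hx h.1))]
        simp [hW]
      rw [swap_count] at h2
      rw [← h2]
      congr 1
      apply Multiset.map_congr rfl
      intro b _
      by_cases hxb : x ∈ b
      · simp only [hxb, true_and, if_pos]
        rw [Finset.filter_mem_eq_inter]
      · simp [hxb]
  constructor
  · -- forward direction
    intro heq b0 hb0
    have hb0K := hsz b0 hb0
    have hkb0 : k ≤ b0.card := hkmin _ hb0K
    have hb02 : 2 ≤ b0.card := hK _ hb0K
    -- find x ∈ b0 outside W
    have hnsub : ¬ b0 ⊆ W := by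
      intro hsub
      have hc := hWcap b0 hb0
      rw [Finset.inter_eq_right.2 hsub] at hc
      omega
    obtain ⟨x, hxb0, hxW⟩ := Finset.not_subset.1 hnsub
    obtain ⟨h1, h2⟩ := hsum x hxW
    set f : Finset (Fin v) → ℕ := fun b => if x ∈ b then b.card - 1 else 0 with hf
    set g : Finset (Fin v) → ℕ := fun b => if x ∈ b then (W ∩ b).card else 0 with hg
    have hpt : ∀ b ∈ B, (k - 1) * g b ≤ f b := by
      intro b hb
      by_cases hxb : x ∈ b
      · simp only [hf, hg, hxb, if_pos]
        have h1' := hWcap b hb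
        have h2' := hkmin _ (hsz b hb)
        have h3 : (k-1) * (W ∩ b).card ≤ (k-1) * 1 := Nat.mul_le_mul_left _ h1'
        omega
      · simp [hf, hg, hxb]
    obtain ⟨B', rfl⟩ := Multiset.exists_cons_of_mem hb0
    have hsle : (B'.map (fun b => (k-1) * g b)).sum ≤ (B'.map f).sum := by
      apply Multiset.sum_map_le_sum_map
      intro b hb
      exact hpt b (Multiset.mem_cons_of_mem hb)
    have htot : f b0 + (B'.map f).sum = (k - 1) * w := by
      have : (Multiset.map f (b0 ::ₘ B')).sum = v - 1 := h1
      rw [Multiset.map_cons, Multiset.sum_cons] at this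
      omega
    have hgtot : (k-1) * g b0 + (B'.map (fun b => (k-1) * g b)).sum = (k - 1) * w := by
      have h2' : (Multiset.map g (b0 ::ₘ B')).sum = w := h2
      rw [Multiset.map_cons, Multiset.sum_cons] at h2'
      have : (B'.map (fun b => (k-1) * g b)).sum = (k-1) * (B'.map g).sum := by
        rw [← Multiset.sum_map_mul_left]
      rw [this]
      rw [← Nat.mul_add, ← h2']
    have heqb : f b0 = (k - 1) * g b0 := by
      have hle := hpt b0 (Multiset.mem_cons_self _ _)
      omega
    -- now unpack
    have hfb0 : f b0 = b0.card - 1 := by simp [hf, hxb0]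
    have hgb0 : g b0 = (W ∩ b0).card := by simp [hg, hxb0]
    rw [hfb0, hgb0] at heqb
    have hcap1 := hWcap b0 (Multiset.mem_cons_self _ _)
    have hcard : (W ∩ b0).card = 1 := by
      rcases Nat.lt_or_ge (W ∩ b0).card 1 with h | h
      · exfalso
        interval_cases h' : (W ∩ b0).card
        · simp [h'] at heqb; omega
      · omega
    constructor
    · rw [hcard, Nat.mul_one] at heqb
      omega
    · rw [Finset.inter_comm]
      exact Finset.card_pos.1 (by omega)
  · -- converse
    intro hall
    have : ∃ x : Fin v, x ∉ W := by
      by_contra h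
      push_neg at h
      have : (univ : Finset (Fin v)) ⊆ W := fun y _ => h y
      have := Finset.card_le_card this
      simp [hW] at this
      omega
    obtain ⟨x, hxW⟩ := this
    obtain ⟨h1, h2⟩ := hsum x hxW
    have hmap : B.map (fun b => if x ∈ b then b.card - 1 else 0)
        = B.map (fun b => (k - 1) * (if x ∈ b then (W ∩ b).card else 0)) := by
      apply Multiset.map_congr rfl
      intro b hb
      by_cases hxb : x ∈ b
      · simp only [hxb, if_pos]
        obtain ⟨hbk, hbW⟩ := hall b hb
        have hc1 : (W ∩ b).card = 1 := by
          have hle := hWcap b hb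
          have hpos : 0 < (W ∩ b).card := Finset.card_pos.2 (by rwa [Finset.inter_comm] at hbW)
          omega
        rw [hbk, hc1, Nat.mul_one]
      · simp [hxb]
    rw [hmap, Multiset.sum_map_mul_left] at h1
    have : (k-1) * (B.map (fun b => if x ∈ b then (W ∩ b).card else 0)).sum = v - 1 := h1
    rw [h2] at this
    omega
end
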